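/- arXiv:0804.3101 — 6 statements merged into one kernel-verified Lean document; each statement's English description precedes it below -/
import Mathlib

section
/- Let μ, η, a₃, S ∈ ℝ and suppose X(y₀, t) = A₁(y₀) t + A₂(y₀) t² + A₃(y₀) t³ + O(t⁴) where A₁(y₀) = y₀ + a₃ μ y₀² + O(y₀³), A₂(y₀) = −1/2 + (η/2 − a₃ μ) y₀ + O(y₀²), A₃(y₀) = (1/3) a₃ μ − (1/6) η + O(y₀), with all O-bounds uniform for small y₀. Let T₃(y₀) = y₀ − (S/2) y₀² + O(y₀³). Then X(y₀, T₃(y₀)) = (1/2) y₀² + (1/3)(η + a₃ μ) y₀³ + O(y₀⁴) as y₀ → 0. -/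
open Filter Asymptotics Topology

private lemma aux_pow_le {m n : ℕ} (h : m ≤ n) :
    (fun y : ℝ => y ^ n) =O[𝓝 (0 : ℝ)] fun y => y ^ m := by
  rw [Asymptotics.isBigO_iff]
  refine ⟨1, ?_⟩
  filter_upwards [eventually_abs_sub_lt (0 : ℝ) one_pos] with y hy
  rw [sub_zero] at hy
  rw [one_mul, Real.norm_eq_abs, Real.norm_eq_abs, abs_pow, abs_pow]
  exact pow_le_pow_of_le_one (abs_nonneg y) hy.le h

private lemma aux_poly (g : ℝ → ℝ) (hg : Continuous g) (k : ℕ) :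
    (fun y : ℝ => y ^ k * g y) =O[𝓝 (0 : ℝ)] fun y => y ^ k := by
  have hg1 : g =O[𝓝 (0 : ℝ)] (fun _ => (1 : ℝ)) := (hg.tendsto 0).isBigO_one ℝ
  simpa using (Asymptotics.isBigO_refl (fun y : ℝ => y ^ k) (𝓝 (0 : ℝ))).mul hg1

/-- Expansion of the map `P₃(y₀) = X(y₀, T₃(y₀))`. If
`X(y₀,t) = A₁(y₀)t + A₂(y₀)t² + A₃(y₀)t³ + O(t⁴)` (uniformly for small `y₀`) with
`A₁(y₀) = y₀ + a₃μy₀² + O(y₀³)`, `A₂(y₀) = −1/2 + (η/2 − a₃μ)y₀ + O(y₀²)`,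
`A₃(y₀) = (1/3)a₃μ − (1/6)η + O(y₀)`, and `T₃(y₀) = y₀ − (S/2)y₀² + O(y₀³)`, then
`X(y₀, T₃(y₀)) = (1/2)y₀² + (1/3)(η + a₃μ)y₀³ + O(y₀⁴)` as `y₀ → 0`. -/
theorem P3_expansion
    (μ η a₃ S : ℝ)
    (A₁ A₂ A₃ : ℝ → ℝ) (X : ℝ → ℝ → ℝ) (T₃ : ℝ → ℝ)
    (hA₁ : (fun y => A₁ y - (y + a₃ * μ * y ^ 2)) =O[𝓝 (0 : ℝ)] fun y => y ^ 3)
    (hA₂ : (fun y => A₂ y - (-(1 / 2) + (η / 2 - a₃ * μ) * y)) =O[𝓝 (0 : ℝ)] fun y => y ^ 2)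
    (hA₃ : (fun y => A₃ y - ((1 / 3) * a₃ * μ - (1 / 6) * η)) =O[𝓝 (0 : ℝ)] fun y => y)
    (hX : ∃ C > 0, ∃ δ > 0, ∀ y t : ℝ, |y| < δ → |t| < δ →
      |X y t - (A₁ y * t + A₂ y * t ^ 2 + A₃ y * t ^ 3)| ≤ C * |t| ^ 4)
    (hT₃ : (fun y => T₃ y - (y - (S / 2) * y ^ 2)) =O[𝓝 (0 : ℝ)] fun y => y ^ 3) :
    (fun y => X y (T₃ y) - ((1 / 2) * y ^ 2 + (1 / 3) * (η + a₃ * μ) * y ^ 3))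
      =O[𝓝 (0 : ℝ)] fun y => y ^ 4 := by
  obtain ⟨C, hC, δ, hδ, hXb⟩ := hX
  -- hA₃ with target y ^ 1
  have hA₃' : (fun y => A₃ y - ((1 / 3) * a₃ * μ - (1 / 6) * η)) =O[𝓝 (0 : ℝ)]
      fun y : ℝ => y ^ 1 :=
    hA₃.congr (fun y => rfl) (fun y => (pow_one y).symm)
  -- p(y) = y - (S/2) y² is O(y)
  have h_p : (fun y : ℝ => y - S / 2 * y ^ 2) =O[𝓝 (0 : ℝ)] fun y => y ^ 1 :=
    (aux_poly (fun y => 1 - S / 2 * y) (by fun_prop) 1).congr (fun y => by ring) (fun y => rfl)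
  have h_p2 : (fun y : ℝ => (y - S / 2 * y ^ 2) ^ 2) =O[𝓝 (0 : ℝ)] fun y => y ^ 2 :=
    (h_p.pow 2).congr (fun y => rfl) (fun y => by ring)
  have h_p3 : (fun y : ℝ => (y - S / 2 * y ^ 2) ^ 3) =O[𝓝 (0 : ℝ)] fun y => y ^ 3 :=
    (h_p.pow 3).congr (fun y => rfl) (fun y => by ring)
  -- q(y) = y + a₃ μ y² is O(y)
  have h_q : (fun y : ℝ => y + a₃ * μ * y ^ 2) =O[𝓝 (0 : ℝ)] fun y => y ^ 1 :=
    (aux_poly (fun y => 1 + a₃ * μ * y) (by fun_prop) 1).congr (fun y => by ring) (fun y => rfl)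
  -- r(y) = -1/2 + (η/2 - a₃ μ) y is O(1)
  have h_r : (fun y : ℝ => -(1 / 2) + (η / 2 - a₃ * μ) * y) =O[𝓝 (0 : ℝ)] fun y => y ^ 0 :=
    (aux_poly (fun y => -(1 / 2) + (η / 2 - a₃ * μ) * y) (by fun_prop) 0).congr
      (fun y => by ring) (fun y => rfl)
  have h_c : (fun _ : ℝ => (1 / 3) * a₃ * μ - (1 / 6) * η) =O[𝓝 (0 : ℝ)] fun y => y ^ 0 :=
    (aux_poly (fun _ => (1 / 3) * a₃ * μ - (1 / 6) * η) (by fun_prop) 0).congr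
      (fun y => by ring) (fun y => rfl)
  -- A₁ is O(y), A₂ and A₃ are O(1)
  have hA₁O : A₁ =O[𝓝 (0 : ℝ)] fun y => y ^ 1 :=
    ((hA₁.trans (aux_pow_le (by norm_num : 1 ≤ 3))).add h_q).congr
      (fun y => by ring) (fun y => rfl)
  have hA₂O : A₂ =O[𝓝 (0 : ℝ)] fun y => y ^ 0 :=
    ((hA₂.trans (aux_pow_le (by norm_num : 0 ≤ 2))).add h_r).congr
      (fun y => by ring) (fun y => rfl)
  have hA₃O : A₃ =O[𝓝 (0 : ℝ)] fun y => y ^ 0 :=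
    ((hA₃'.trans (aux_pow_le (by norm_num : 0 ≤ 1))).add h_c).congr
      (fun y => by ring) (fun y => rfl)
  -- T₃ is O(y)
  have hT : T₃ =O[𝓝 (0 : ℝ)] fun y => y ^ 1 :=
    ((hT₃.trans (aux_pow_le (by norm_num : 1 ≤ 3))).add h_p).congr
      (fun y => by ring) (fun y => rfl)
  -- T₃ + p is O(y)
  have hTpp : (fun y => T₃ y + (y - S / 2 * y ^ 2)) =O[𝓝 (0 : ℝ)] fun y => y ^ 1 :=
    ((hT₃.trans (aux_pow_le (by norm_num : 1 ≤ 3))).add (h_p.const_mul_left 2)).congr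
      (fun y => by ring) (fun y => rfl)
  -- T₃² + T₃ p + p² is O(y²)
  have hTq : (fun y => T₃ y ^ 2 + T₃ y * (y - S / 2 * y ^ 2) + (y - S / 2 * y ^ 2) ^ 2)
      =O[𝓝 (0 : ℝ)] fun y => y ^ 2 := by
    have h1 : (fun y => T₃ y ^ 2) =O[𝓝 (0 : ℝ)] fun y => y ^ 2 :=
      (hT.pow 2).congr (fun y => rfl) (fun y => by ring)
    have h2 : (fun y => T₃ y * (y - S / 2 * y ^ 2)) =O[𝓝 (0 : ℝ)] fun y => y ^ 2 :=
      (hT.mul h_p).congr (fun y => rfl) (fun y => by ring)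
    exact (h1.add h2).add h_p2
  -- Piece 1: remainder of the Taylor expansion of X
  have B1 : (fun y => X y (T₃ y) - (A₁ y * T₃ y + A₂ y * T₃ y ^ 2 + A₃ y * T₃ y ^ 3))
      =O[𝓝 (0 : ℝ)] fun y => y ^ 4 := by
    have hTt : Tendsto T₃ (𝓝 (0 : ℝ)) (𝓝 0) := by
      refine hT.trans_tendsto ?_
      simpa using (continuous_pow 1).tendsto (0 : ℝ)
    have hsmall : ∀ᶠ y in 𝓝 (0 : ℝ), |T₃ y| < δ := by
      have := hTt.eventually (eventually_abs_sub_lt (0 : ℝ) hδ)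
      simpa using this
    have hy : ∀ᶠ y in 𝓝 (0 : ℝ), |y| < δ := by
      simpa using eventually_abs_sub_lt (0 : ℝ) hδ
    have step : (fun y => X y (T₃ y) - (A₁ y * T₃ y + A₂ y * T₃ y ^ 2 + A₃ y * T₃ y ^ 3))
        =O[𝓝 (0 : ℝ)] fun y => T₃ y ^ 4 := by
      rw [Asymptotics.isBigO_iff]
      refine ⟨C, ?_⟩
      filter_upwards [hsmall, hy] with y h1 h2
      rw [Real.norm_eq_abs, Real.norm_eq_abs, abs_pow]
      exact hXb y (T₃ y) h2 h1
    exact step.trans ((hT.pow 4).congr (fun y => rfl) (fun y => by ring))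
  -- Piece 2: A₁ T₃ vs q p
  have B2 : (fun y => A₁ y * T₃ y - (y + a₃ * μ * y ^ 2) * (y - S / 2 * y ^ 2))
      =O[𝓝 (0 : ℝ)] fun y => y ^ 4 := by
    have e1 : (fun y => A₁ y * (T₃ y - (y - S / 2 * y ^ 2))) =O[𝓝 (0 : ℝ)]
        fun y => y ^ 4 := (hA₁O.mul hT₃).congr (fun y => rfl) (fun y => by ring)
    have e2 : (fun y => (A₁ y - (y + a₃ * μ * y ^ 2)) * (y - S / 2 * y ^ 2)) =O[𝓝 (0 : ℝ)]
        fun y => y ^ 4 := (hA₁.mul h_p).congr (fun y => rfl) (fun y => by ring)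
    exact (e1.add e2).congr (fun y => by ring) (fun y => rfl)
  -- Piece 3: A₂ T₃² vs r p²
  have B3 : (fun y => A₂ y * T₃ y ^ 2
      - (-(1 / 2) + (η / 2 - a₃ * μ) * y) * (y - S / 2 * y ^ 2) ^ 2)
      =O[𝓝 (0 : ℝ)] fun y => y ^ 4 := by
    have e1 : (fun y => A₂ y * ((T₃ y - (y - S / 2 * y ^ 2)) * (T₃ y + (y - S / 2 * y ^ 2))))
        =O[𝓝 (0 : ℝ)] fun y => y ^ 4 :=
      (hA₂O.mul (hT₃.mul hTpp)).congr (fun y => rfl) (fun y => by ring)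
    have e2 : (fun y => (A₂ y - (-(1 / 2) + (η / 2 - a₃ * μ) * y)) * (y - S / 2 * y ^ 2) ^ 2)
        =O[𝓝 (0 : ℝ)] fun y => y ^ 4 :=
      (hA₂.mul h_p2).congr (fun y => rfl) (fun y => by ring)
    exact (e1.add e2).congr (fun y => by ring) (fun y => rfl)
  -- Piece 4: A₃ T₃³ vs c p³
  have B4 : (fun y => A₃ y * T₃ y ^ 3
      - ((1 / 3) * a₃ * μ - (1 / 6) * η) * (y - S / 2 * y ^ 2) ^ 3)
      =O[𝓝 (0 : ℝ)] fun y => y ^ 4 := by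
    have e1 : (fun y => A₃ y * ((T₃ y - (y - S / 2 * y ^ 2))
        * (T₃ y ^ 2 + T₃ y * (y - S / 2 * y ^ 2) + (y - S / 2 * y ^ 2) ^ 2)))
        =O[𝓝 (0 : ℝ)] fun y => y ^ 4 := by
      have := (hA₃O.mul (hT₃.mul hTq)).congr (fun y : ℝ => rfl)
        (fun y : ℝ => by ring : ∀ y : ℝ, y ^ 0 * (y ^ 3 * y ^ 2) = y ^ 5)
      exact this.trans (aux_pow_le (by norm_num : 4 ≤ 5))
    have e2 : (fun y => (A₃ y - ((1 / 3) * a₃ * μ - (1 / 6) * η)) * (y - S / 2 * y ^ 2) ^ 3)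
        =O[𝓝 (0 : ℝ)] fun y => y ^ 4 :=
      (hA₃'.mul h_p3).congr (fun y => rfl) (fun y => by ring)
    exact (e1.add e2).congr (fun y => by ring) (fun y => rfl)
  -- Piece 5: explicit polynomial identity
  have B5 : (fun y => (y + a₃ * μ * y ^ 2) * (y - S / 2 * y ^ 2)
      + (-(1 / 2) + (η / 2 - a₃ * μ) * y) * (y - S / 2 * y ^ 2) ^ 2
      + ((1 / 3) * a₃ * μ - (1 / 6) * η) * (y - S / 2 * y ^ 2) ^ 3
      - ((1 / 2) * y ^ 2 + (1 / 3) * (η + a₃ * μ) * y ^ 3))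
      =O[𝓝 (0 : ℝ)] fun y => y ^ 4 :=
    (aux_poly (fun y => -(S / 2) * (S / 4 + η / 2)
        - ((1 / 3) * a₃ * μ - (1 / 6) * η) * (S / 2) ^ 3 * y ^ 2) (by fun_prop) 4).congr
      (fun y => by ring) (fun y => rfl)
  exact ((((B1.add B2).add B3).add B4).add B5).congr (fun y => by ring) (fun y => rfl)
end

section
/- Let μ, η, a₃, τ ∈ ℝ and suppose P₁, P₂, P₃ are functions defined near 0 satisfying, as their arguments tend to 0 (from the right where relevant): P₁(ε) = √2 ε^{1/2} − (2/3)(η + a₃μ) ε + O(ε^{3/2}) for ε ≥ 0; P₂(y) = −y − (2/3)(τ + a₃μ) y² + O(y³); P₃(y) = (1/2) y² + (1/3)(η + a₃μ) y³ + O(y⁴). Then the composition satisfies (P₃ ∘ P₂ ∘ P₁)(ε) = ε + (4√2/3)(τ − η) ε^{3/2} + O(ε²) as ε → 0⁺. -/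
open Filter Asymptotics Topology

/-- The discontinuity map `P_dm = P₃ ∘ P₂ ∘ P₁` has a 3/2-type
singularity: if `P₁(ε) = √2 ε^{1/2} − (2/3)(η+a₃μ)ε + O(ε^{3/2})` (as `ε → 0⁺`),
`P₂(y) = −y − (2/3)(τ+a₃μ)y² + O(y³)` and
`P₃(y) = (1/2)y² + (1/3)(η+a₃μ)y³ + O(y⁴)` (as `y → 0`), then
`(P₃ ∘ P₂ ∘ P₁)(ε) = ε + (4√2/3)(τ − η)ε^{3/2} + O(ε²)` as `ε → 0⁺`. -/
theorem discontinuity_map_expansion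
    (μ η a₃ τ : ℝ) (P₁ P₂ P₃ : ℝ → ℝ)
    (hP₁ : (fun ε => P₁ ε - (Real.sqrt 2 * Real.sqrt ε - (2 / 3) * (η + a₃ * μ) * ε))
      =O[𝓝[≥] (0 : ℝ)] fun ε => ε * Real.sqrt ε)
    (hP₂ : (fun y => P₂ y - (-y - (2 / 3) * (τ + a₃ * μ) * y ^ 2))
      =O[𝓝 (0 : ℝ)] fun y => y ^ 3)
    (hP₃ : (fun y => P₃ y - ((1 / 2) * y ^ 2 + (1 / 3) * (η + a₃ * μ) * y ^ 3))
      =O[𝓝 (0 : ℝ)] fun y => y ^ 4) :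
    (fun ε => P₃ (P₂ (P₁ ε)) - (ε + (4 * Real.sqrt 2 / 3) * (τ - η) * (ε * Real.sqrt ε)))
      =O[𝓝[>] (0 : ℝ)] fun ε => ε ^ 2 := by
  set l : Filter ℝ := 𝓝[>] (0 : ℝ) with hl
  set c : ℝ := η + a₃ * μ with hc
  set d : ℝ := τ + a₃ * μ with hd
  set e : ℝ := (2/3) * c - (4/3) * d with he
  set s : ℝ → ℝ := fun ε => Real.sqrt ε with hs
  have hεpos : ∀ᶠ ε in l, (0:ℝ) < ε := self_mem_nhdsWithin
  -- eventual identities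
  have hsq : ∀ᶠ ε in l, s ε ^ 2 = ε := by
    filter_upwards [hεpos] with ε hε
    exact Real.sq_sqrt hε.le
  have hts : Tendsto s l (𝓝 0) := by
    have : Tendsto s (𝓝 0) (𝓝 (Real.sqrt 0)) :=
      Real.continuous_sqrt.tendsto 0
    rw [Real.sqrt_zero] at this
    exact this.mono_left nhdsWithin_le_nhds
  have hlt1 : ∀ᶠ ε in l, s ε < 1 := Tendsto.eventually_lt_const one_pos hts
  -- monotonicity of powers of sqrt
  have hmono : ∀ j k : ℕ, j ≤ k → (fun ε => s ε ^ k) =O[l] fun ε => s ε ^ j := by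
    intro j k hjk
    apply IsBigO.of_bound 1
    filter_upwards [hεpos, hlt1] with ε hε h1
    have hnn : 0 ≤ s ε := Real.sqrt_nonneg ε
    rw [Real.norm_eq_abs, Real.norm_eq_abs, one_mul,
      abs_of_nonneg (pow_nonneg hnn _), abs_of_nonneg (pow_nonneg hnn _)]
    exact pow_le_pow_of_le_one hnn h1.le hjk
  have h2sq : Real.sqrt 2 ^ 2 = 2 := Real.sq_sqrt (by norm_num)
  -- P₁ expansion on l in terms of s
  have hA : (fun ε => P₁ ε - (Real.sqrt 2 * s ε - (2/3) * c * s ε ^ 2)) =O[l] fun ε => s ε ^ 3 := by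
    have hmonoF : l ≤ 𝓝[≥] (0:ℝ) := nhdsWithin_mono 0 (Set.Ioi_subset_Ici le_rfl)
    refine (hP₁.mono hmonoF).congr' ?_ ?_
    · filter_upwards [hεpos] with ε hε
      have h2 := Real.sq_sqrt hε.le
      simp only [s]
      linear_combination (-(2/3) * c) * h2
    · filter_upwards [hεpos] with ε hε
      have h2 := Real.sq_sqrt hε.le
      simp only [s]
      linear_combination (-(Real.sqrt ε)) * h2
  -- P₁ = O(s)
  have hmain1 : (fun ε => Real.sqrt 2 * s ε - (2/3) * c * s ε ^ 2) =O[l] fun ε => s ε ^ 1 := by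
    have h1 : (fun ε => Real.sqrt 2 * s ε) =O[l] fun ε => s ε ^ 1 :=
      ((isBigO_refl s l).congr_right (fun ε => (pow_one _).symm)).const_mul_left _
    have h2 : (fun ε => (2/3) * c * s ε ^ 2) =O[l] fun ε => s ε ^ 1 :=
      ((hmono 1 2 (by norm_num)).const_mul_left _)
    exact h1.sub h2
  have hP₁s : P₁ =O[l] fun ε => s ε ^ 1 := by
    have := (hA.trans (hmono 1 3 (by norm_num))).add hmain1
    exact this.congr_left (fun ε => by ring)
  have hs1 : (fun ε => s ε ^ 1) =O[l] fun ε => s ε := (isBigO_refl s l).congr_left (fun ε => (pow_one _).symm)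
  have hT₁ : Tendsto P₁ l (𝓝 0) := (hP₁s.trans hs1).trans_tendsto hts
  -- compose P₂
  have hB : (fun ε => P₂ (P₁ ε) - (-(P₁ ε) - (2/3) * d * (P₁ ε) ^ 2)) =O[l] fun ε => (P₁ ε) ^ 3 :=
    hP₂.comp_tendsto hT₁
  have hP₁cube : (fun ε => (P₁ ε) ^ 3) =O[l] fun ε => s ε ^ 3 :=
    (hP₁s.pow 3).congr_right (fun ε => by ring)
  -- P₁² - 2s² = O(s³)
  have hC1 : (fun ε => P₁ ε - Real.sqrt 2 * s ε) =O[l] fun ε => s ε ^ 2 := by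
    have h2' : (fun ε => (2/3) * c * s ε ^ 2) =O[l] fun ε => s ε ^ 2 :=
      (isBigO_refl _ l).const_mul_left _
    exact ((hA.trans (hmono 2 3 (by norm_num))).sub h2').congr_left (fun ε => by ring)
  have hC2 : (fun ε => P₁ ε + Real.sqrt 2 * s ε) =O[l] fun ε => s ε ^ 1 := by
    have : (fun ε => Real.sqrt 2 * s ε) =O[l] fun ε => s ε ^ 1 :=
      ((isBigO_refl s l).congr_right (fun ε => (pow_one _).symm)).const_mul_left _
    exact hP₁s.add this
  have hC : (fun ε => (P₁ ε) ^ 2 - 2 * s ε ^ 2) =O[l] fun ε => s ε ^ 3 := by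
    refine (hC1.mul hC2).congr (fun ε => ?_) (fun ε => by ring)
    have : (P₁ ε - Real.sqrt 2 * s ε) * (P₁ ε + Real.sqrt 2 * s ε)
        = P₁ ε ^ 2 - Real.sqrt 2 ^ 2 * s ε ^ 2 := by ring
    rw [this, h2sq]
  -- y₂ := P₂ ∘ P₁ expansion
  have hD : (fun ε => P₂ (P₁ ε) - (-(Real.sqrt 2) * s ε + e * s ε ^ 2)) =O[l] fun ε => s ε ^ 3 := by
    have := ((hB.trans hP₁cube).sub hA).sub (hC.const_mul_left ((2/3) * d))
    exact this.congr_left (fun ε => by rw [he]; ring)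
  have hy₂main : (fun ε => -(Real.sqrt 2) * s ε + e * s ε ^ 2) =O[l] fun ε => s ε ^ 1 := by
    have h1 : (fun ε => -(Real.sqrt 2) * s ε) =O[l] fun ε => s ε ^ 1 :=
      ((isBigO_refl s l).congr_right (fun ε => (pow_one _).symm)).const_mul_left _
    exact h1.add ((hmono 1 2 (by norm_num)).const_mul_left e)
  have hy₂ : (fun ε => P₂ (P₁ ε)) =O[l] fun ε => s ε ^ 1 := by
    have := (hD.trans (hmono 1 3 (by norm_num))).add hy₂main
    exact this.congr_left (fun ε => by ring)
  have hT₂ : Tendsto (fun ε => P₂ (P₁ ε)) l (𝓝 0) := (hy₂.trans hs1).trans_tendsto hts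
  -- compose P₃
  have hF : (fun ε => P₃ (P₂ (P₁ ε)) - ((1/2) * (P₂ (P₁ ε)) ^ 2 + (1/3) * c * (P₂ (P₁ ε)) ^ 3))
      =O[l] fun ε => s ε ^ 4 :=
    (hP₃.comp_tendsto hT₂).trans ((hy₂.pow 4).congr_right (fun ε => by ring))
  -- B := -√2 s + e s²
  set B : ℝ → ℝ := fun ε => -(Real.sqrt 2) * s ε + e * s ε ^ 2 with hBdef
  have hBs : B =O[l] fun ε => s ε ^ 1 := hy₂main
  -- y₂² - B² = O(s⁴)
  have hG : (fun ε => (P₂ (P₁ ε)) ^ 2 - (B ε) ^ 2) =O[l] fun ε => s ε ^ 4 := by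
    refine (hD.mul (hy₂.add hBs)).congr (fun ε => by ring) (fun ε => by ring)
  -- y₂³ - B³ = O(s⁴)
  have hH : (fun ε => (P₂ (P₁ ε)) ^ 3 - (B ε) ^ 3) =O[l] fun ε => s ε ^ 4 := by
    have hq : (fun ε => (P₂ (P₁ ε))^2 + P₂ (P₁ ε) * B ε + (B ε)^2) =O[l] fun ε => s ε ^ 2 := by
      have t1 : (fun ε => (P₂ (P₁ ε))^2) =O[l] fun ε => s ε ^ 2 :=
        (hy₂.pow 2).congr_right (fun ε => by ring)
      have t2 : (fun ε => P₂ (P₁ ε) * B ε) =O[l] fun ε => s ε ^ 2 :=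
        (hy₂.mul hBs).congr_right (fun ε => by ring)
      have t3 : (fun ε => (B ε)^2) =O[l] fun ε => s ε ^ 2 :=
        (hBs.pow 2).congr_right (fun ε => by ring)
      exact (t1.add t2).add t3
    have := hD.mul hq
    refine (this.trans ((hmono 4 5 (by norm_num)).congr_left (fun ε => by ring))).congr_left
      (fun ε => by ring)
  -- B² and B³ expansions
  have hB2O : (fun ε => (B ε) ^ 2 - (2 * s ε ^ 2 - 2 * Real.sqrt 2 * e * s ε ^ 3))
      =O[l] fun ε => s ε ^ 4 := by
    have : (fun ε => e^2 * s ε ^ 4) =O[l] fun ε => s ε ^ 4 := (isBigO_refl _ l).const_mul_left _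
    refine this.congr_left (fun ε => ?_)
    have hexp : (B ε) ^ 2 = Real.sqrt 2 ^ 2 * s ε ^ 2 - 2 * Real.sqrt 2 * e * s ε ^ 3 + e^2 * s ε ^ 4 := by
      rw [hBdef]; ring
    rw [hexp, h2sq]; ring
  have hB3O : (fun ε => (B ε) ^ 3 - (-(2 * Real.sqrt 2)) * s ε ^ 3) =O[l] fun ε => s ε ^ 4 := by
    have t1 : (fun ε => 6 * e * s ε ^ 4) =O[l] fun ε => s ε ^ 4 :=
      (isBigO_refl _ l).const_mul_left _
    have t2 : (fun ε => -(3 * Real.sqrt 2 * e^2) * s ε ^ 5) =O[l] fun ε => s ε ^ 4 :=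
      ((hmono 4 5 (by norm_num)).const_mul_left _)
    have t3 : (fun ε => e^3 * s ε ^ 6) =O[l] fun ε => s ε ^ 4 :=
      ((hmono 4 6 (by norm_num)).const_mul_left _)
    refine ((t1.add t2).add t3).congr_left (fun ε => ?_)
    have hexp : (B ε) ^ 3 = -(Real.sqrt 2 ^ 2 * Real.sqrt 2) * s ε ^ 3
        + 3 * (Real.sqrt 2 ^ 2) * e * s ε ^ 4 - 3 * Real.sqrt 2 * e^2 * s ε ^ 5 + e^3 * s ε ^ 6 := by
      rw [hBdef]; ring
    rw [hexp, h2sq]; ring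
  -- assemble
  have hmainO : (fun ε => P₃ (P₂ (P₁ ε)) - (s ε ^ 2 + (4 * Real.sqrt 2 / 3) * (τ - η) * s ε ^ 3))
      =O[l] fun ε => s ε ^ 4 := by
    have hsum := (((hF.add (hG.const_mul_left (1/2))).add (hH.const_mul_left ((1/3) * c))).add
      (hB2O.const_mul_left (1/2))).add (hB3O.const_mul_left ((1/3) * c))
    refine hsum.congr_left (fun ε => ?_)
    rw [he, hc, hd]; ring
  refine hmainO.congr' ?_ ?_
  · filter_upwards [hεpos] with ε hε
    have h2 := Real.sq_sqrt hε.le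
    simp only [s]
    linear_combination (-(1 + (4 * Real.sqrt 2 / 3) * (τ - η) * Real.sqrt ε)) * h2
  · filter_upwards [hεpos] with ε hε
    have h2 := Real.sq_sqrt hε.le
    simp only [s]
    linear_combination (ε + Real.sqrt ε ^ 2) * h2
end

section
/- Let ω > 0 and a₀, σ₂ ∈ ℝ with a₀ ≠ 0. Let Φ(μ, η) = η·(π/ω + R₁(μ,η)) − (πσ₂/ω) η x*(μ,η) + (2πa₀/ω) x*(μ,η)² + R₂(μ,η) be a C^k (k ≥ 3) function defined near (0,0), where R₁(μ,η) = O(|(μ,η)|), R₂(μ,η) = O(|(μ,η)|³), and x* is a C^k function with x*(μ,η) = −μ/ω² + O(|(μ,η)|²). Then there exists a unique C^k function ĥ₂ defined near 0 with ĥ₂(0) = 0 such that Φ(μ, ĥ₂(μ)) = 0 for all small μ, and ĥ₂(μ) = −(2a₀/ω⁴) μ² + O(μ³) as μ → 0. -/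
open Filter Asymptotics Topology

lemma aux_pow_isBigO {E : Type*} [SeminormedAddCommGroup E] {m n : ℕ} (h : n ≤ m) :
    (fun x : E => ‖x‖ ^ m) =O[𝓝 0] fun x => ‖x‖ ^ n := by
  rw [Asymptotics.isBigO_iff]
  refine ⟨1, ?_⟩
  have hev : ∀ᶠ x : E in 𝓝 0, ‖x‖ ≤ 1 :=
    Filter.eventually_of_mem (Metric.closedBall_mem_nhds 0 one_pos)
      (fun x hx => by simpa [dist_zero_right] using hx)
  filter_upwards [hev] with x hx
  rw [Real.norm_of_nonneg (pow_nonneg (norm_nonneg x) _),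
    Real.norm_of_nonneg (pow_nonneg (norm_nonneg x) _), one_mul]
  exact pow_le_pow_of_le_one (norm_nonneg x) hx h

lemma aux_pow_isBigO_real {m n : ℕ} (h : n ≤ m) :
    (fun x : ℝ => x ^ m) =O[𝓝 0] fun x => x ^ n :=
  Asymptotics.isBigO_norm_norm.mp (by simpa only [norm_pow] using aux_pow_isBigO (E := ℝ) h)

set_option maxHeartbeats 1000000 in
/-- The grazing curve. If
`Φ(μ,η) = η(π/ω + R₁) − (πσ₂/ω)η x*(μ,η) + (2πa₀/ω)x*(μ,η)² + R₂` is C^k near `(0,0)`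
with `R₁ = O(|(μ,η)|)`, `R₂ = O(|(μ,η)|³)` and `x*(μ,η) = −μ/ω² + O(|(μ,η)|²)`, then
there is a unique C^k function `ĥ₂` near 0 with `ĥ₂(0) = 0`, `Φ(μ, ĥ₂(μ)) = 0` for small
`μ`, and `ĥ₂(μ) = −(2a₀/ω⁴)μ² + O(μ³)`. -/
theorem grazing_curve_h2
    (k : ℕ) (hk : 3 ≤ k) (ω a₀ σ₂ : ℝ) (hω : 0 < ω) (ha₀ : a₀ ≠ 0)
    (Φ R₁ R₂ : ℝ × ℝ → ℝ) (xs : ℝ × ℝ → ℝ)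
    (hΦ : ContDiffOn ℝ k Φ (Metric.ball (0 : ℝ × ℝ) 1))
    (hxs : ContDiffOn ℝ k xs (Metric.ball (0 : ℝ × ℝ) 1))
    (hΦeq : ∀ q : ℝ × ℝ, Φ q = q.2 * (Real.pi / ω + R₁ q)
      - (Real.pi * σ₂ / ω) * q.2 * xs q + (2 * Real.pi * a₀ / ω) * (xs q) ^ 2 + R₂ q)
    (hR₁ : R₁ =O[𝓝 ((0, 0) : ℝ × ℝ)] fun q => ‖q‖)
    (hR₂ : R₂ =O[𝓝 ((0, 0) : ℝ × ℝ)] fun q => ‖q‖ ^ 3)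
    (hxse : (fun q : ℝ × ℝ => xs q - (-(q.1) / ω ^ 2))
      =O[𝓝 ((0, 0) : ℝ × ℝ)] fun q => ‖q‖ ^ 2) :
    ∃ ε > 0, ∃ h₂hat : ℝ → ℝ,
      ContDiffOn ℝ k h₂hat (Set.Ioo (-ε) ε) ∧
      h₂hat 0 = 0 ∧
      (∀ μ ∈ Set.Ioo (-ε) ε, Φ (μ, h₂hat μ) = 0) ∧
      -- uniqueness
      (∀ h' : ℝ → ℝ, ContinuousAt h' 0 → h' 0 = 0 →
        (∀ᶠ μ in 𝓝 (0 : ℝ), Φ (μ, h' μ) = 0) → h' =ᶠ[𝓝 (0 : ℝ)] h₂hat) ∧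
      -- ĥ₂(μ) = −(2a₀/ω⁴)μ² + O(μ³)
      ((fun μ => h₂hat μ - (-(2 * a₀ / ω ^ 4) * μ ^ 2)) =O[𝓝 (0 : ℝ)] fun μ => μ ^ 3) := by
  have h00 : ((0, 0) : ℝ × ℝ) = 0 := rfl
  rw [h00] at hR₁ hR₂ hxse
  have hπ : (0 : ℝ) < Real.pi := Real.pi_pos
  have hω' : ω ≠ 0 := ne_of_gt hω
  set c : ℝ := Real.pi / ω with hcdef
  have hc : c ≠ 0 := div_ne_zero (ne_of_gt hπ) hω'
  have hk1 : 1 ≤ (k : WithTop ℕ∞) := by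
    exact_mod_cast Nat.one_le_iff_ne_zero.mpr (by omega)
  have hballnhds : Metric.ball (0 : ℝ × ℝ) 1 ∈ 𝓝 (0 : ℝ × ℝ) :=
    Metric.ball_mem_nhds _ one_pos
  have hΦat : ContDiffAt ℝ k Φ 0 := hΦ.contDiffAt hballnhds
  -- values at 0
  have hxs0 : xs 0 = 0 := by
    obtain ⟨C, hC⟩ := hxse.bound
    have := hC.self_of_nhds
    simpa using this
  have hR₂0 : R₂ 0 = 0 := by
    obtain ⟨C, hC⟩ := hR₂.bound
    have := hC.self_of_nhds
    simpa using this
  have hΦ0 : Φ 0 = 0 := by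
    have := hΦeq 0
    simp only [Prod.fst_zero, Prod.snd_zero, hxs0, hR₂0] at this
    simpa using this
  -- basic asymptotics at 0 in ℝ×ℝ
  have hsnd : (fun q : ℝ × ℝ => q.2) =O[𝓝 (0 : ℝ × ℝ)] fun q => ‖q‖ :=
    Asymptotics.isBigO_of_le _ (fun q => by
      simpa using norm_snd_le q)
  have hfstO : (fun q : ℝ × ℝ => -(q.1) / ω ^ 2) =O[𝓝 (0 : ℝ × ℝ)] fun q => ‖q‖ := by
    have h1 : (fun q : ℝ × ℝ => q.1) =O[𝓝 (0 : ℝ × ℝ)] fun q => ‖q‖ :=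
      Asymptotics.isBigO_of_le _ (fun q => by simpa using norm_fst_le q)
    have := (h1.const_mul_left (-(ω ^ 2)⁻¹))
    exact this.congr_left (fun q => by ring)
  have h21 : (fun q : ℝ × ℝ => ‖q‖ ^ 2) =O[𝓝 (0 : ℝ × ℝ)] fun q => ‖q‖ := by
    simpa using aux_pow_isBigO (E := ℝ × ℝ) (m := 2) (n := 1) one_le_two
  have h32 : (fun q : ℝ × ℝ => ‖q‖ ^ 3) =O[𝓝 (0 : ℝ × ℝ)] fun q => ‖q‖ ^ 2 :=
    aux_pow_isBigO (E := ℝ × ℝ) (by norm_num)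
  have hxsO : xs =O[𝓝 (0 : ℝ × ℝ)] fun q => ‖q‖ := by
    have := (hxse.trans h21).add hfstO
    exact this.congr_left (fun q => by ring)
  -- Φ q - c * q.2 = O(‖q‖²)
  have hbig : (fun q : ℝ × ℝ => Φ q - c * q.2) =O[𝓝 (0 : ℝ × ℝ)] fun q => ‖q‖ ^ 2 := by
    have t1 : (fun q : ℝ × ℝ => q.2 * R₁ q) =O[𝓝 (0 : ℝ × ℝ)] fun q => ‖q‖ ^ 2 :=
      (hsnd.mul hR₁).congr_right (fun q => (sq ‖q‖).symm)
    have t2 : (fun q : ℝ × ℝ => (Real.pi * σ₂ / ω) * q.2 * xs q)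
        =O[𝓝 (0 : ℝ × ℝ)] fun q => ‖q‖ ^ 2 := by
      have := ((hsnd.mul hxsO).const_mul_left (Real.pi * σ₂ / ω)).congr_right
        (fun q => (sq ‖q‖).symm)
      exact this.congr_left (fun q => by ring)
    have t3 : (fun q : ℝ × ℝ => (2 * Real.pi * a₀ / ω) * (xs q) ^ 2)
        =O[𝓝 (0 : ℝ × ℝ)] fun q => ‖q‖ ^ 2 := by
      have := ((hxsO.mul hxsO).const_mul_left (2 * Real.pi * a₀ / ω)).congr_right
        (fun q => (sq ‖q‖).symm)
      exact this.congr_left (fun q => by ring)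
    have t4 : R₂ =O[𝓝 (0 : ℝ × ℝ)] fun q => ‖q‖ ^ 2 := hR₂.trans h32
    have := ((t1.sub t2).add t3).add t4
    exact this.congr_left (fun q => by rw [hΦeq q]; ring)
  -- derivative of Φ at 0
  set L : ℝ × ℝ →L[ℝ] ℝ := c • ContinuousLinearMap.snd ℝ ℝ ℝ with hLdef
  have hΦL : HasFDerivAt Φ L 0 := by
    rw [hasFDerivAt_iff_isLittleO_nhds_zero]
    have hlo : (fun q : ℝ × ℝ => ‖q‖ ^ 2) =o[𝓝 (0 : ℝ × ℝ)] fun q => ‖q‖ := by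
      have h1 : (fun q : ℝ × ℝ => ‖q‖) =o[𝓝 (0 : ℝ × ℝ)] (fun _ => (1 : ℝ)) :=
        (Asymptotics.isLittleO_one_iff ℝ).mpr tendsto_norm_zero
      have := h1.mul_isBigO (Asymptotics.isBigO_refl (fun q : ℝ × ℝ => ‖q‖) (𝓝 0))
      simpa [sq] using this
    have := (hbig.trans_isLittleO hlo)
    have h2 : (fun q : ℝ × ℝ => Φ q - c * q.2) =o[𝓝 (0 : ℝ × ℝ)] fun q => q :=
      Asymptotics.isLittleO_norm_right.mp this
    apply h2.congr' _ (Filter.EventuallyEq.refl _ _)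
    filter_upwards with q
    simp [hΦ0, hLdef, ContinuousLinearMap.smul_apply]
  -- the map F and its inverse
  set F : ℝ × ℝ → ℝ × ℝ := fun q => (q.1, Φ q) with hFdef
  have hF0 : F 0 = 0 := by simp [hFdef, hΦ0]
  have hFat : ContDiffAt ℝ k F 0 := contDiffAt_fst.prodMk hΦat
  set B1 : ℝ × ℝ →L[ℝ] ℝ × ℝ := (ContinuousLinearMap.fst ℝ ℝ ℝ).prod L with hB1def
  set B2 : ℝ × ℝ →L[ℝ] ℝ × ℝ :=
    (ContinuousLinearMap.fst ℝ ℝ ℝ).prod (c⁻¹ • ContinuousLinearMap.snd ℝ ℝ ℝ) with hB2def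
  set A : (ℝ × ℝ) ≃L[ℝ] (ℝ × ℝ) := ContinuousLinearEquiv.equivOfInverse B1 B2
    (fun q => by
      simp [hB1def, hB2def, hLdef, ContinuousLinearMap.prod_apply,
        ContinuousLinearMap.smul_apply, inv_mul_cancel_left₀ hc])
    (fun q => by
      simp [hB1def, hB2def, hLdef, ContinuousLinearMap.prod_apply,
        ContinuousLinearMap.smul_apply, mul_inv_cancel_left₀ hc]) with hAdef
  have hFd : HasFDerivAt F (A : (ℝ × ℝ) →L[ℝ] (ℝ × ℝ)) 0 := by
    have : HasFDerivAt F B1 0 := (hasFDerivAt_fst).prodMk hΦL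
    exact this
  have hst : HasStrictFDerivAt F (A : (ℝ × ℝ) →L[ℝ] (ℝ × ℝ)) 0 :=
    hFat.hasStrictFDerivAt' hFd (lt_of_lt_of_le zero_lt_one hk1).ne'
  set G : ℝ × ℝ → ℝ × ℝ := hst.localInverse F A 0 with hGdef
  have hGat : ContDiffAt ℝ k G (F 0) := hFat.to_localInverse hFd (lt_of_lt_of_le zero_lt_one hk1).ne'
  have hGat0 : ContDiffAt ℝ k G 0 := by rwa [hF0] at hGat
  set h₂ : ℝ → ℝ := fun μ => (G (μ, 0)).2 with hh2def
  -- right inverse along μ ↦ (μ,0)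
  have htz : Tendsto (fun μ : ℝ => ((μ, 0) : ℝ × ℝ)) (𝓝 0) (𝓝 (0 : ℝ × ℝ)) := by
    have : ContinuousAt (fun μ : ℝ => ((μ, 0) : ℝ × ℝ)) 0 :=
      continuousAt_id.prodMk continuousAt_const
    exact this.tendsto
  have hri : ∀ᶠ y in 𝓝 (0 : ℝ × ℝ), F (G y) = y := by
    have := hst.eventually_right_inverse
    rwa [hF0] at this
  have hri' : ∀ᶠ μ : ℝ in 𝓝 0, F (G (μ, 0)) = (μ, 0) := htz.eventually hri
  have hkey : ∀ᶠ μ : ℝ in 𝓝 0, G (μ, 0) = (μ, h₂ μ) ∧ Φ (μ, h₂ μ) = 0 := by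
    filter_upwards [hri'] with μ hμ
    have h1 : (G (μ, 0)).1 = μ := congrArg Prod.fst hμ
    have hG : G (μ, 0) = (μ, h₂ μ) := by
      rw [hh2def]; exact Prod.ext h1 rfl
    refine ⟨hG, ?_⟩
    have h2 : Φ (G (μ, 0)) = 0 := congrArg Prod.snd hμ
    rwa [hG] at h2
  have hzero : ∀ᶠ μ : ℝ in 𝓝 0, Φ (μ, h₂ μ) = 0 := hkey.mono fun μ h => h.2
  have hG00 : G 0 = 0 := by
    have := hst.localInverse_apply_image
    rwa [hF0] at this
  have hh20 : h₂ 0 = 0 := by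
    have : ((0 : ℝ), (0 : ℝ)) = (0 : ℝ × ℝ) := rfl
    simp [hh2def, this, hG00]
  -- smoothness of h₂
  have hh2at : ContDiffAt ℝ k h₂ 0 := by
    have hinner : ContDiffAt ℝ k (fun μ : ℝ => ((μ, 0) : ℝ × ℝ)) 0 :=
      (contDiff_id.prodMk contDiff_const).contDiffAt
    have hcomp : ContDiffAt ℝ k (fun μ : ℝ => G (μ, 0)) 0 :=
      ContDiffAt.comp 0 hGat0 hinner
    exact contDiffAt_snd.comp 0 hcomp
  obtain ⟨u, hu, hcd⟩ := hh2at.contDiffOn le_rfl (by simp)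
  -- asymptotics
  have hcont : ContinuousAt h₂ 0 := hh2at.continuousAt
  have htq : Tendsto (fun μ : ℝ => ((μ, h₂ μ) : ℝ × ℝ)) (𝓝 0) (𝓝 (0 : ℝ × ℝ)) := by
    have : ContinuousAt (fun μ : ℝ => ((μ, h₂ μ) : ℝ × ℝ)) 0 :=
      continuousAt_id.prodMk hcont
    have := this.tendsto
    rwa [hh20] at this
  have hO1 : h₂ =O[𝓝 (0 : ℝ)] fun μ => μ := by
    have hdiff : DifferentiableAt ℝ h₂ 0 := hh2at.differentiableAt (lt_of_lt_of_le zero_lt_one hk1).ne'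
    have := hdiff.isBigO_sub
    simpa [hh20] using this
  have hqO : (fun μ : ℝ => ‖((μ, h₂ μ) : ℝ × ℝ)‖) =O[𝓝 (0 : ℝ)] fun μ => μ := by
    obtain ⟨C, hC⟩ := hO1.bound
    rw [Asymptotics.isBigO_iff]
    refine ⟨max 1 C, hC.mono fun μ hμ => ?_⟩
    rw [Real.norm_of_nonneg (norm_nonneg _)]
    rw [Prod.norm_def]
    have h1 : ‖μ‖ ≤ max 1 C * ‖μ‖ := by
      nlinarith [norm_nonneg μ, le_max_left (1 : ℝ) C]
    have h2 : ‖h₂ μ‖ ≤ max 1 C * ‖μ‖ := by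
      calc ‖h₂ μ‖ ≤ C * ‖μ‖ := hμ
        _ ≤ max 1 C * ‖μ‖ := by
          have := le_max_right (1 : ℝ) C
          nlinarith [norm_nonneg μ]
    exact max_le h1 h2
  have hqO2 : (fun μ : ℝ => ‖((μ, h₂ μ) : ℝ × ℝ)‖ ^ 2) =O[𝓝 (0 : ℝ)] fun μ => μ ^ 2 :=
    hqO.pow 2
  have hqO3 : (fun μ : ℝ => ‖((μ, h₂ μ) : ℝ × ℝ)‖ ^ 3) =O[𝓝 (0 : ℝ)] fun μ => μ ^ 3 :=
    hqO.pow 3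
  have hR₁c : (fun μ : ℝ => R₁ (μ, h₂ μ)) =O[𝓝 (0 : ℝ)] fun μ => μ :=
    (hR₁.comp_tendsto htq).trans hqO
  have hxse' : (fun μ : ℝ => xs (μ, h₂ μ) - (-μ / ω ^ 2)) =O[𝓝 (0 : ℝ)] fun μ => μ ^ 2 :=
    (hxse.comp_tendsto htq).trans hqO2
  have hR₂c : (fun μ : ℝ => R₂ (μ, h₂ μ)) =O[𝓝 (0 : ℝ)] fun μ => μ ^ 3 :=
    (hR₂.comp_tendsto htq).trans hqO3
  have hmu21 : (fun μ : ℝ => μ ^ 2) =O[𝓝 (0 : ℝ)] fun μ => μ := by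
    simpa using aux_pow_isBigO_real (m := 2) (n := 1) one_le_two
  have hmu32 : (fun μ : ℝ => μ ^ 3) =O[𝓝 (0 : ℝ)] fun μ => μ ^ 2 :=
    aux_pow_isBigO_real (by norm_num)
  have hb : (fun μ : ℝ => -μ / ω ^ 2) =O[𝓝 (0 : ℝ)] fun μ => μ := by
    have := (Asymptotics.isBigO_refl (fun μ : ℝ => μ) (𝓝 0)).const_mul_left (-(ω ^ 2)⁻¹)
    exact this.congr_left (fun μ => by ring)
  have hxsc : (fun μ : ℝ => xs (μ, h₂ μ)) =O[𝓝 (0 : ℝ)] fun μ => μ := by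
    have := (hxse'.trans hmu21).add hb
    exact this.congr_left (fun μ => by ring)
  -- step A : h₂ = O(μ²)
  have key1 : (fun μ : ℝ => c * h₂ μ) =O[𝓝 (0 : ℝ)] fun μ => μ ^ 2 := by
    have heq : (fun μ : ℝ => c * h₂ μ) =ᶠ[𝓝 (0 : ℝ)]
        (fun μ => -(h₂ μ * R₁ (μ, h₂ μ)) + (Real.pi * σ₂ / ω) * (h₂ μ * xs (μ, h₂ μ))
          - (2 * Real.pi * a₀ / ω) * (xs (μ, h₂ μ)) ^ 2 - R₂ (μ, h₂ μ)) := by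
      filter_upwards [hzero] with μ hμ
      rw [hΦeq (μ, h₂ μ)] at hμ
      simp only at hμ
      rw [hcdef]
      linarith [hμ]
    have t1 : (fun μ : ℝ => h₂ μ * R₁ (μ, h₂ μ)) =O[𝓝 (0 : ℝ)] fun μ => μ ^ 2 :=
      (hO1.mul hR₁c).congr_right (fun μ => (sq μ).symm)
    have t2 : (fun μ : ℝ => h₂ μ * xs (μ, h₂ μ)) =O[𝓝 (0 : ℝ)] fun μ => μ ^ 2 :=
      (hO1.mul hxsc).congr_right (fun μ => (sq μ).symm)
    have t3 : (fun μ : ℝ => (xs (μ, h₂ μ)) ^ 2) =O[𝓝 (0 : ℝ)] fun μ => μ ^ 2 :=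
      (hxsc.mul hxsc).congr (fun μ => (sq _).symm) (fun μ => (sq μ).symm)
    have := ((t1.neg_left.add (t2.const_mul_left (Real.pi * σ₂ / ω))).sub
      (t3.const_mul_left (2 * Real.pi * a₀ / ω))).sub (hR₂c.trans hmu32)
    exact heq.trans_isBigO this
  have hO2 : h₂ =O[𝓝 (0 : ℝ)] fun μ => μ ^ 2 := by
    have := key1.const_mul_left c⁻¹
    exact this.congr_left (fun μ => by rw [inv_mul_cancel_left₀ hc])
  -- step B : final asymptotics
  have key2 : (fun μ : ℝ => c * (h₂ μ - (-(2 * a₀ / ω ^ 4) * μ ^ 2)))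
      =O[𝓝 (0 : ℝ)] fun μ => μ ^ 3 := by
    have heq : (fun μ : ℝ => c * (h₂ μ - (-(2 * a₀ / ω ^ 4) * μ ^ 2))) =ᶠ[𝓝 (0 : ℝ)]
        (fun μ => -(h₂ μ * R₁ (μ, h₂ μ)) + (Real.pi * σ₂ / ω) * (h₂ μ * xs (μ, h₂ μ))
          - (2 * Real.pi * a₀ / ω) *
            ((xs (μ, h₂ μ) - (-μ / ω ^ 2)) * (xs (μ, h₂ μ) + (-μ / ω ^ 2)))
          - R₂ (μ, h₂ μ)) := by
      filter_upwards [hzero] with μ hμ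
      rw [hΦeq (μ, h₂ μ)] at hμ
      simp only at hμ
      rw [hcdef] at hμ ⊢
      linear_combination hμ
    have t1 : (fun μ : ℝ => h₂ μ * R₁ (μ, h₂ μ)) =O[𝓝 (0 : ℝ)] fun μ => μ ^ 3 :=
      (hO2.mul hR₁c).congr_right (fun μ => by ring)
    have t2 : (fun μ : ℝ => h₂ μ * xs (μ, h₂ μ)) =O[𝓝 (0 : ℝ)] fun μ => μ ^ 3 :=
      (hO2.mul hxsc).congr_right (fun μ => by ring)
    have hplus : (fun μ : ℝ => xs (μ, h₂ μ) + (-μ / ω ^ 2)) =O[𝓝 (0 : ℝ)] fun μ => μ :=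
      hxsc.add hb
    have t3 : (fun μ : ℝ => (xs (μ, h₂ μ) - (-μ / ω ^ 2)) * (xs (μ, h₂ μ) + (-μ / ω ^ 2)))
        =O[𝓝 (0 : ℝ)] fun μ => μ ^ 3 :=
      (hxse'.mul hplus).congr_right (fun μ => by ring)
    have := ((t1.neg_left.add (t2.const_mul_left (Real.pi * σ₂ / ω))).sub
      (t3.const_mul_left (2 * Real.pi * a₀ / ω))).sub hR₂c
    exact heq.trans_isBigO this
  have hfinal : (fun μ : ℝ => h₂ μ - (-(2 * a₀ / ω ^ 4) * μ ^ 2))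
      =O[𝓝 (0 : ℝ)] fun μ => μ ^ 3 := by
    have := key2.const_mul_left c⁻¹
    exact this.congr_left (fun μ => by rw [inv_mul_cancel_left₀ hc])
  -- choose ε
  have hset : u ∩ {μ : ℝ | Φ (μ, h₂ μ) = 0} ∈ 𝓝 (0 : ℝ) :=
    Filter.inter_mem hu hzero
  obtain ⟨ε, hε, hball⟩ := Metric.mem_nhds_iff.mp hset
  refine ⟨ε, hε, h₂, ?_, hh20, ?_, ?_, hfinal⟩
  · apply hcd.mono
    intro μ hμ
    have : μ ∈ Metric.ball (0 : ℝ) ε := by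
      rw [Real.ball_eq_Ioo]
      simpa using hμ
    exact (hball this).1
  · intro μ hμ
    have : μ ∈ Metric.ball (0 : ℝ) ε := by
      rw [Real.ball_eq_Ioo]
      simpa using hμ
    exact (hball this).2
  · intro h' hc' h0' hev'
    have ht' : Tendsto (fun μ : ℝ => ((μ, h' μ) : ℝ × ℝ)) (𝓝 0) (𝓝 (0 : ℝ × ℝ)) := by
      have : ContinuousAt (fun μ : ℝ => ((μ, h' μ) : ℝ × ℝ)) 0 :=
        continuousAt_id.prodMk hc'
      have := this.tendsto
      rwa [h0'] at this
    have hli : ∀ᶠ x in 𝓝 (0 : ℝ × ℝ), G (F x) = x := hst.eventually_left_inverse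
    have hevG : ∀ᶠ μ : ℝ in 𝓝 0, G (F (μ, h' μ)) = (μ, h' μ) := ht'.eventually hli
    filter_upwards [hevG, hev', hkey] with μ h1 h2 h3
    have hF' : F (μ, h' μ) = (μ, 0) := by
      simp [hFdef, h2]
    rw [hF'] at h1
    have h4 : ((μ, h₂ μ) : ℝ × ℝ) = (μ, h' μ) := h3.1.symm.trans h1
    exact (congrArg Prod.snd h4).symm
end

section
/- Let ω > 0 and a₀, σ₂ ∈ ℝ with a₀ ≠ 0, and let g(ε, η) = (1 + η(π/ω + R₁(η))) ε + (πσ₂/ω) η ε² + (2πa₀/ω) ε³ + R₂(ε, η) be defined for small ε ≥ 0 and small η, where R₁(η) = O(η) and R₂(ε,η) = O(ε⁴) uniformly in η, with g continuously differentiable in the relevant variables. Then for all sufficiently small η with a₀ η < 0 there exists ε*(η) > 0 with g(ε*(η), η) = ε*(η), and ε*(η) = √(−η/(2a₀)) + o(√|η|) as η → 0 with a₀η < 0. -/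
open Filter Asymptotics Topology

set_option maxHeartbeats 4000000
open Filter Asymptotics Topology

lemma hopf_key (ω a₀ σ₂ : ℝ) (hω : 0 < ω) (ha₀ : a₀ ≠ 0)
    (g : ℝ → ℝ → ℝ) (R₁ : ℝ → ℝ) (R₂ : ℝ → ℝ → ℝ) (δ₀ : ℝ) (hδ₀ : 0 < δ₀)
    (hgeq : ∀ ε η : ℝ, 0 ≤ ε → ε < δ₀ → |η| < δ₀ →
      g ε η = (1 + η * (Real.pi / ω + R₁ η)) * ε + (Real.pi * σ₂ / ω) * η * ε ^ 2
        + (2 * Real.pi * a₀ / ω) * ε ^ 3 + R₂ ε η)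
    (hg : ContDiffOn ℝ 1 (fun p : ℝ × ℝ => g p.1 p.2)
      (Set.Ioo (0 : ℝ) δ₀ ×ˢ Set.Ioo (-δ₀) δ₀))
    (C C₁ B M δ₁ : ℝ) (hC : 0 < C) (hC₁ : 0 ≤ C₁) (hδ₁ : 0 < δ₁)
    (hR₁' : ∀ y : ℝ, |y| < δ₁ → |R₁ y| ≤ C₁ * |y|)
    (hR₂' : ∀ ε η : ℝ, 0 ≤ ε → ε < δ₀ → |η| < δ₀ → |R₂ ε η| ≤ C * ε ^ 4)
    (hB : B = Real.sqrt (1 / (2 * |a₀|)))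
    (hM : M = 3 * B * C₁ / 2 + 9 * B ^ 2 / 4 * (Real.pi * |σ₂| / ω) + C * (81 * B ^ 4 / 16))
    (η : ℝ) (hη1 : |η| < δ₀) (hη2 : |η| < δ₁) (hη3 : |η| ≤ 1)
    (hη4 : (3 * B / 2) * Real.sqrt |η| < δ₀)
    (hη5 : Real.sqrt |η| * M < 3 * Real.pi * B / (8 * ω))
    (hsign : a₀ * η < 0) :
    ∃ ε : ℝ, (B / 2) * Real.sqrt |η| ≤ ε ∧ g ε η = ε ∧
      |ε - Real.sqrt (-η / (2 * a₀))| ≤ (M / ((Real.pi / ω) * B ^ 2 * |a₀|)) * |η| := by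
  have hπ := Real.pi_pos
  have habs : 0 < |a₀| := abs_pos.2 ha₀
  have hB0 : 0 < B := by rw [hB]; exact Real.sqrt_pos.2 (by positivity)
  have hη0 : η ≠ 0 := by rintro rfl; simp at hsign
  set q := Real.sqrt |η| with hqdef
  have hq0 : 0 < q := Real.sqrt_pos.2 (abs_pos.2 hη0)
  have hq2 : q ^ 2 = |η| := Real.sq_sqrt (abs_nonneg η)
  have hq1 : q ≤ 1 := by rw [hqdef]; exact Real.sqrt_le_one.2 hη3
  set P := Real.pi / ω with hPdef
  have hP0 : 0 < P := by positivity
  have hη5' : q * M < 3 / 8 * P * B := by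
    have h : 3 * Real.pi * B / (8 * ω) = 3 / 8 * P * B := by rw [hPdef]; ring
    linarith [hη5, h.le, h.ge]
  have hM0 : 0 < M := by
    rw [hM]
    have h1 : 0 ≤ 3 * B * C₁ / 2 := by
      have := mul_nonneg (mul_nonneg (by norm_num : (0:ℝ) ≤ 3) hB0.le) hC₁; linarith
    have h2 : 0 ≤ 9 * B ^ 2 / 4 * (Real.pi * |σ₂| / ω) := by positivity
    have h3 : 0 < C * (81 * B ^ 4 / 16) := by positivity
    linarith
  -- r = -η/(2a₀) rewritten
  have hr : -η / (2 * a₀) = |η| * (1 / (2 * |a₀|)) := by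
    rcases ha₀.lt_or_gt with h | h
    · have hηpos : 0 < η := by nlinarith
      rw [abs_of_pos hηpos, abs_of_neg h]; field_simp
    · have hηneg : η < 0 := by nlinarith
      rw [abs_of_neg hηneg, abs_of_pos h]; field_simp
  set s := Real.sqrt (-η / (2 * a₀)) with hsdef
  have hsq : s = q * B := by
    rw [hsdef, hr, hB, Real.sqrt_mul (abs_nonneg η)]
  have hs0 : 0 < s := by rw [hsq]; positivity
  have hs2 : 2 * a₀ * s ^ 2 = -η := by
    rw [hsdef, Real.sq_sqrt (by rw [hr]; positivity)]
    field_simp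
  clear_value q P s
  have ht2δ : 3 * s / 2 < δ₀ := by
    have : 3 * s / 2 = (3 * B / 2) * q := by rw [hsq]; ring
    linarith [this.le, this.ge, hη4]
  have hηδ : -δ₀ < η ∧ η < δ₀ := abs_lt.1 hη1
  -- error bound
  have hErr : ∀ ε : ℝ, s / 2 ≤ ε → ε ≤ 3 * s / 2 →
      |ε * (η * R₁ η) + (Real.pi * σ₂ / ω) * η * ε ^ 2 + R₂ ε η| ≤ M * q ^ 4 := by
    intro ε h1 h2
    have hε0 : 0 < ε := lt_of_lt_of_le (by linarith) h1
    have hεδ : ε < δ₀ := lt_of_le_of_lt h2 ht2δ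
    have hεq : ε ≤ 3 * B / 2 * q := by
      calc ε ≤ 3 * s / 2 := h2
        _ = 3 * B / 2 * q := by rw [hsq]; ring
    have b1 : |R₁ η| ≤ C₁ * q ^ 2 := by rw [hq2]; exact hR₁' η hη2
    have b2 : |R₂ ε η| ≤ C * ε ^ 4 := hR₂' ε η hε0.le hεδ hη1
    have hq5 : q ^ 5 ≤ q ^ 4 := pow_le_pow_of_le_one hq0.le hq1 (by norm_num)
    have e1 : |ε * (η * R₁ η)| ≤ 3 * B * C₁ / 2 * q ^ 4 := by
      rw [abs_mul, abs_mul, abs_of_pos hε0]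
      have hR1nn : (0:ℝ) ≤ |R₁ η| := abs_nonneg _
      have hbc : (0:ℝ) ≤ 3 * B * C₁ / 2 := by positivity
      calc ε * (|η| * |R₁ η|) ≤ (3 * B / 2 * q) * (q ^ 2 * (C₁ * q ^ 2)) := by
            apply mul_le_mul hεq _ (by positivity) (by positivity)
            rw [← hq2]
            exact mul_le_mul le_rfl b1 hR1nn (by positivity)
        _ = 3 * B * C₁ / 2 * q ^ 5 := by ring
        _ ≤ 3 * B * C₁ / 2 * q ^ 4 := mul_le_mul_of_nonneg_left hq5 hbc
    have e2 : |(Real.pi * σ₂ / ω) * η * ε ^ 2| ≤ 9 * B ^ 2 / 4 * (Real.pi * |σ₂| / ω) * q ^ 4 := by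
      have habs2 : |(Real.pi * σ₂ / ω) * η * ε ^ 2| = Real.pi * |σ₂| / ω * (q ^ 2 * ε ^ 2) := by
        rw [abs_mul, abs_mul, abs_div, abs_mul, abs_of_pos hπ, abs_of_pos hω, abs_pow,
          abs_of_pos hε0, ← hq2]
        ring
      rw [habs2]
      have hε2 : ε ^ 2 ≤ (3 * B / 2 * q) ^ 2 := pow_le_pow_left₀ hε0.le hεq 2
      have h0 : (0:ℝ) ≤ Real.pi * |σ₂| / ω := by positivity
      calc Real.pi * |σ₂| / ω * (q ^ 2 * ε ^ 2)
          ≤ Real.pi * |σ₂| / ω * (q ^ 2 * (3 * B / 2 * q) ^ 2) := by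
            apply mul_le_mul_of_nonneg_left _ h0
            exact mul_le_mul_of_nonneg_left hε2 (by positivity)
        _ = 9 * B ^ 2 / 4 * (Real.pi * |σ₂| / ω) * q ^ 4 := by ring
    have e3 : |R₂ ε η| ≤ C * (81 * B ^ 4 / 16) * q ^ 4 := by
      have hε4 : ε ^ 4 ≤ (3 * B / 2 * q) ^ 4 := by
        apply pow_le_pow_left₀ hε0.le hεq
      calc |R₂ ε η| ≤ C * ε ^ 4 := b2
        _ ≤ C * (3 * B / 2 * q) ^ 4 := mul_le_mul_of_nonneg_left hε4 hC.le
        _ = C * (81 * B ^ 4 / 16) * q ^ 4 := by ring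
    calc |ε * (η * R₁ η) + (Real.pi * σ₂ / ω) * η * ε ^ 2 + R₂ ε η|
        ≤ |ε * (η * R₁ η) + (Real.pi * σ₂ / ω) * η * ε ^ 2| + |R₂ ε η| := abs_add_le _ _
      _ ≤ |ε * (η * R₁ η)| + |(Real.pi * σ₂ / ω) * η * ε ^ 2| + |R₂ ε η| := by
          linarith [abs_add_le (ε * (η * R₁ η)) ((Real.pi * σ₂ / ω) * η * ε ^ 2)]
      _ ≤ M * q ^ 4 := by rw [hM]; linarith
  -- formula for g ε η - ε
  have hform : ∀ ε : ℝ, 0 < ε → ε < δ₀ →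
      g ε η - ε = ε * P * (η + 2 * a₀ * ε ^ 2)
        + (ε * (η * R₁ η) + (Real.pi * σ₂ / ω) * η * ε ^ 2 + R₂ ε η) := by
    intro ε h1 h2
    rw [hgeq ε η h1.le h2 hη1, hPdef]; ring
  have hMq : M * q ^ 4 < 3 / 8 * P * B * q ^ 3 := by
    have h := mul_lt_mul_of_pos_right hη5' (pow_pos hq0 3)
    calc M * q ^ 4 = q * M * q ^ 3 := by ring
      _ < 3 / 8 * P * B * q ^ 3 := h
  -- continuity
  have hcont : ContinuousOn (fun ε : ℝ => g ε η - ε) (Set.uIcc (s / 2) (3 * s / 2)) := by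
    have hIcc : Set.uIcc (s / 2) (3 * s / 2) = Set.Icc (s / 2) (3 * s / 2) :=
      Set.uIcc_of_le (by linarith)
    rw [hIcc]
    apply ContinuousOn.sub _ continuousOn_id
    have hmap : Set.MapsTo (fun ε : ℝ => (ε, η)) (Set.Icc (s / 2) (3 * s / 2))
        (Set.Ioo (0:ℝ) δ₀ ×ˢ Set.Ioo (-δ₀) δ₀) := by
      intro ε hε
      exact ⟨⟨lt_of_lt_of_le (by linarith) hε.1, lt_of_le_of_lt hε.2 ht2δ⟩, hηδ.1, hηδ.2⟩
    have hcomp := ContinuousOn.comp hg.continuousOn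
      (Continuous.continuousOn (continuous_id.prodMk continuous_const)) hmap
    exact hcomp
  -- endpoint values
  have hv1 : η + 2 * a₀ * (s / 2) ^ 2 = 3 / 4 * η := by linear_combination hs2 / 4
  have hv2 : η + 2 * a₀ * (3 * s / 2) ^ 2 = -(5 / 4) * η := by linear_combination 9 / 4 * hs2
  have hE1 := hErr (s / 2) le_rfl (by linarith)
  have hE2 := hErr (3 * s / 2) (by linarith) le_rfl
  have hf1 := hform (s / 2) (by linarith) (by linarith)
  have hf2 := hform (3 * s / 2) (by linarith) ht2δ
  -- sign analysis and IVT
  have hX0 : 0 < P * B * q ^ 3 := mul_pos (mul_pos hP0 hB0) (pow_pos hq0 3)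
  have hmem : (0:ℝ) ∈ Set.uIcc (g (s / 2) η - s / 2) (g (3 * s / 2) η - 3 * s / 2) := by
    rcases abs_le.1 hE1 with ⟨hE1a, hE1b⟩
    rcases abs_le.1 hE2 with ⟨hE2a, hE2b⟩
    rcases hη0.lt_or_gt with hneg | hpos
    · -- η < 0 : f(s/2) ≤ 0 ≤ f(3s/2)
      have hq2' : q ^ 2 = -η := by rw [hq2, abs_of_neg hneg]
      have hηq : η = -q ^ 2 := by linarith
      have hm1 : (s / 2) * P * (η + 2 * a₀ * (s / 2) ^ 2) = -(3 / 8 * P * B * q ^ 3) := by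
        rw [hv1, hηq, hsq]; ring
      have hm2 : (3 * s / 2) * P * (η + 2 * a₀ * (3 * s / 2) ^ 2) = 15 / 8 * P * B * q ^ 3 := by
        rw [hv2, hηq, hsq]; ring
      refine Set.mem_uIcc.2 (Or.inl ⟨?_, ?_⟩)
      · linarith only [hf1, hm1, hE1b, hMq]
      · linarith only [hf2, hm2, hE2a, hMq, hX0]
    · -- η > 0 : f(3s/2) ≤ 0 ≤ f(s/2)
      have hq2' : q ^ 2 = η := by rw [hq2, abs_of_pos hpos]
      have hηq : η = q ^ 2 := hq2'.symm
      have hm1 : (s / 2) * P * (η + 2 * a₀ * (s / 2) ^ 2) = 3 / 8 * P * B * q ^ 3 := by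
        rw [hv1, hηq, hsq]; ring
      have hm2 : (3 * s / 2) * P * (η + 2 * a₀ * (3 * s / 2) ^ 2) = -(15 / 8 * P * B * q ^ 3) := by
        rw [hv2, hηq, hsq]; ring
      refine Set.mem_uIcc.2 (Or.inr ⟨?_, ?_⟩)
      · linarith only [hf2, hm2, hE2b, hMq, hX0]
      · linarith only [hf1, hm1, hE1a, hMq, hX0]
  obtain ⟨ε, hεmem, hfix⟩ := intermediate_value_uIcc hcont hmem
  rw [Set.uIcc_of_le (by linarith : s / 2 ≤ 3 * s / 2)] at hεmem
  obtain ⟨h1, h2⟩ := hεmem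
  have hε0 : 0 < ε := lt_of_lt_of_le (by linarith) h1
  have hεfix : g ε η = ε := by
    have : g ε η - ε = 0 := hfix
    linarith
  refine ⟨ε, by have h1' := h1; rw [hsq] at h1'; linarith only [h1'], hεfix, ?_⟩
  -- quantitative bound
  have hEε := hErr ε h1 h2
  have hfε := hform ε hε0 (lt_of_le_of_lt h2 ht2δ)
  have hmain : |ε * P * (η + 2 * a₀ * ε ^ 2)| ≤ M * q ^ 4 := by
    have hz : ε * P * (η + 2 * a₀ * ε ^ 2)
        = -(ε * (η * R₁ η) + (Real.pi * σ₂ / ω) * η * ε ^ 2 + R₂ ε η) := by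
      have : g ε η - ε = 0 := by rw [hεfix]; ring
      linarith [hfε]
    rw [hz, abs_neg]; exact hEε
  have hX : η + 2 * a₀ * ε ^ 2 = 2 * a₀ * ((ε - s) * (ε + s)) := by linear_combination hs2
  have hmain2 : ε * P * (2 * |a₀| * (|ε - s| * (ε + s))) ≤ M * q ^ 4 := by
    have : |ε * P * (η + 2 * a₀ * ε ^ 2)|
        = ε * P * (2 * |a₀| * (|ε - s| * (ε + s))) := by
      rw [hX, abs_mul, abs_mul, abs_mul, abs_mul, abs_mul, abs_of_pos hε0, abs_of_pos hP0,
        abs_of_pos (by linarith : (0:ℝ) < ε + s)]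
      norm_num
    linarith [hmain, this.le, this.ge]
  set D := |ε - s| with hDdef
  have hD0 : (0:ℝ) ≤ D := abs_nonneg _
  have hεl : q * B / 2 ≤ ε := by have h1' := h1; rw [hsq] at h1'; linarith only [h1']
  have hsl : q * B ≤ ε + s := by linarith only [hε0, hsq.ge]
  have hstep : P * B ^ 2 * |a₀| * D * q ^ 2 ≤ M * q ^ 4 := by
    have h1' : (q * B / 2) * (P * (2 * |a₀| * (D * (q * B)))) ≤
        ε * (P * (2 * |a₀| * (D * (ε + s)))) := by
      have hinner : P * (2 * |a₀| * (D * (q * B))) ≤ P * (2 * |a₀| * (D * (ε + s))) := by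
        apply mul_le_mul_of_nonneg_left _ hP0.le
        apply mul_le_mul_of_nonneg_left _ (by positivity)
        exact mul_le_mul_of_nonneg_left hsl hD0
      calc (q * B / 2) * (P * (2 * |a₀| * (D * (q * B))))
          ≤ (q * B / 2) * (P * (2 * |a₀| * (D * (ε + s)))) := by
            apply mul_le_mul_of_nonneg_left hinner (by positivity)
        _ ≤ ε * (P * (2 * |a₀| * (D * (ε + s)))) := by
            apply mul_le_mul_of_nonneg_right hεl (by positivity)
    have heq1 : (q * B / 2) * (P * (2 * |a₀| * (D * (q * B))))
        = P * B ^ 2 * |a₀| * D * q ^ 2 := by ring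
    have heq2 : ε * (P * (2 * |a₀| * (D * (ε + s))))
        = ε * P * (2 * |a₀| * (|ε - s| * (ε + s))) := by rw [hDdef]; ring
    have hMq4 : 0 < M * q ^ 4 := mul_pos hM0 (pow_pos hq0 4)
    linarith only [h1', hmain2, heq1, heq2, hMq4]
  -- conclude D ≤ K * |η|
  rw [← hq2]
  rw [div_mul_eq_mul_div, le_div_iff₀ (by positivity : (0:ℝ) < P * B ^ 2 * |a₀|)]
  nlinarith only [hstep, pow_pos hq0 2, hD0, hP0, hB0, habs, hM0, hq0]

/-- Amplitude of the Hopf cycle. For the return map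
`g(ε,η) = (1 + η(π/ω + R₁(η)))ε + (πσ₂/ω)ηε² + (2πa₀/ω)ε³ + R₂(ε,η)` (for small
`ε ≥ 0`, `η`), with `R₁(η) = O(η)` and `R₂(ε,η) = O(ε⁴)` uniformly in `η`, for all
sufficiently small `η` with `a₀η < 0` there is a positive fixed point `ε*(η)`, and
`ε*(η) = √(−η/(2a₀)) + o(√|η|)`. -/
theorem hopf_cycle_amplitude
    (ω a₀ σ₂ : ℝ) (hω : 0 < ω) (ha₀ : a₀ ≠ 0)
    (g : ℝ → ℝ → ℝ) (R₁ : ℝ → ℝ) (R₂ : ℝ → ℝ → ℝ) (δ₀ : ℝ) (hδ₀ : 0 < δ₀)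
    (hgeq : ∀ ε η : ℝ, 0 ≤ ε → ε < δ₀ → |η| < δ₀ →
      g ε η = (1 + η * (Real.pi / ω + R₁ η)) * ε + (Real.pi * σ₂ / ω) * η * ε ^ 2
        + (2 * Real.pi * a₀ / ω) * ε ^ 3 + R₂ ε η)
    (hR₁ : R₁ =O[𝓝 (0 : ℝ)] fun η => η)
    (hR₂ : ∃ C > 0, ∀ ε η : ℝ, 0 ≤ ε → ε < δ₀ → |η| < δ₀ → |R₂ ε η| ≤ C * ε ^ 4)
    (hg : ContDiffOn ℝ 1 (fun p : ℝ × ℝ => g p.1 p.2)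
      (Set.Ioo (0 : ℝ) δ₀ ×ˢ Set.Ioo (-δ₀) δ₀)) :
    ∃ δ > 0, ∃ εs : ℝ → ℝ,
      (∀ η : ℝ, |η| < δ → a₀ * η < 0 → 0 < εs η ∧ g (εs η) η = εs η) ∧
      -- ε*(η) = √(−η/(2a₀)) + o(√|η|) as η → 0 with a₀η < 0
      ((fun η => εs η - Real.sqrt (-η / (2 * a₀)))
        =o[𝓝[{η : ℝ | a₀ * η < 0}] 0] fun η => Real.sqrt |η|) := by
  have hπ := Real.pi_pos
  have habs : 0 < |a₀| := abs_pos.2 ha₀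
  obtain ⟨C, hCpos, hR₂'⟩ := hR₂
  obtain ⟨c₁, hc₁⟩ := hR₁.bound
  rw [Metric.eventually_nhds_iff] at hc₁
  obtain ⟨δ₁, hδ₁pos, hR₁''⟩ := hc₁
  set C₁ := max c₁ 0 with hC₁def
  have hC₁0 : 0 ≤ C₁ := le_max_right _ _
  have hR₁' : ∀ y : ℝ, |y| < δ₁ → |R₁ y| ≤ C₁ * |y| := by
    intro y hy
    have h := hR₁'' (show dist y 0 < δ₁ by simpa [Real.dist_eq] using hy)
    simp only [Real.norm_eq_abs] at h
    calc |R₁ y| ≤ c₁ * |y| := h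
      _ ≤ C₁ * |y| := mul_le_mul_of_nonneg_right (le_max_left _ _) (abs_nonneg y)
  set B := Real.sqrt (1 / (2 * |a₀|)) with hBdef
  have hB0 : 0 < B := Real.sqrt_pos.2 (by positivity)
  set M := 3 * B * C₁ / 2 + 9 * B ^ 2 / 4 * (Real.pi * |σ₂| / ω) + C * (81 * B ^ 4 / 16)
    with hMdef
  have hM0 : 0 < M := by
    have h1 : 0 ≤ 3 * B * C₁ / 2 := by positivity
    have h2 : 0 ≤ 9 * B ^ 2 / 4 * (Real.pi * |σ₂| / ω) := by positivity
    have h3 : 0 < C * (81 * B ^ 4 / 16) := by positivity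
    rw [hMdef]; linarith
  set K := M / ((Real.pi / ω) * B ^ 2 * |a₀|) with hKdef
  have hK0 : 0 < K := by rw [hKdef]; positivity
  set δ := min (min δ₀ δ₁) (min 1 (min ((2 * δ₀ / (3 * B)) ^ 2)
    ((3 * Real.pi * B / (8 * ω * M)) ^ 2))) with hδdef
  have hδpos : 0 < δ := by
    rw [hδdef]
    apply lt_min (lt_min hδ₀ hδ₁pos)
    refine lt_min one_pos (lt_min (by positivity) (by positivity))
  clear_value C₁ B M K δ
  have key : ∀ η : ℝ, |η| < δ → a₀ * η < 0 → ∃ ε : ℝ,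
      (B / 2) * Real.sqrt |η| ≤ ε ∧ g ε η = ε ∧
      |ε - Real.sqrt (-η / (2 * a₀))| ≤ K * |η| := by
    intro η hη hsign
    rw [hδdef] at hη
    have hη1 : |η| < δ₀ := lt_of_lt_of_le hη (le_trans (min_le_left _ _) (min_le_left _ _))
    have hη2 : |η| < δ₁ := lt_of_lt_of_le hη (le_trans (min_le_left _ _) (min_le_right _ _))
    have hη3 : |η| ≤ 1 :=
      le_of_lt (lt_of_lt_of_le hη (le_trans (min_le_right _ _) (min_le_left _ _)))
    have hηa : |η| < (2 * δ₀ / (3 * B)) ^ 2 := lt_of_lt_of_le hη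
      (le_trans (min_le_right _ _) (le_trans (min_le_right _ _) (min_le_left _ _)))
    have hηb : |η| < (3 * Real.pi * B / (8 * ω * M)) ^ 2 := lt_of_lt_of_le hη
      (le_trans (min_le_right _ _) (le_trans (min_le_right _ _) (min_le_right _ _)))
    have hq4 : Real.sqrt |η| < 2 * δ₀ / (3 * B) := (Real.sqrt_lt' (by positivity)).2 hηa
    have hq5 : Real.sqrt |η| < 3 * Real.pi * B / (8 * ω * M) :=
      (Real.sqrt_lt' (by positivity)).2 hηb
    have hη4 : (3 * B / 2) * Real.sqrt |η| < δ₀ := by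
      have h := mul_lt_mul_of_pos_left hq4 (show (0:ℝ) < 3 * B / 2 by positivity)
      calc (3 * B / 2) * Real.sqrt |η| < (3 * B / 2) * (2 * δ₀ / (3 * B)) := h
        _ = δ₀ := by field_simp
    have hη5 : Real.sqrt |η| * M < 3 * Real.pi * B / (8 * ω) := by
      have h := mul_lt_mul_of_pos_right hq5 hM0
      calc Real.sqrt |η| * M < 3 * Real.pi * B / (8 * ω * M) * M := h
        _ = 3 * Real.pi * B / (8 * ω) := by field_simp
    have h := hopf_key ω a₀ σ₂ hω ha₀ g R₁ R₂ δ₀ hδ₀ hgeq hg C C₁ B M δ₁ hCpos hC₁0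
      hδ₁pos hR₁' hR₂' hBdef hMdef η hη1 hη2 hη3 hη4 hη5 hsign
    obtain ⟨ε, h1, h2, h3⟩ := h
    refine ⟨ε, h1, h2, ?_⟩
    rw [hKdef]
    exact h3
  refine ⟨δ, hδpos, fun η =>
    if h : |η| < δ ∧ a₀ * η < 0 then (key η h.1 h.2).choose else Real.sqrt (-η / (2 * a₀)),
    ?_, ?_⟩
  · intro η h1 h2
    simp only [dif_pos (And.intro h1 h2)]
    obtain ⟨he1, he2, _⟩ := (key η h1 h2).choose_spec
    have hη0 : η ≠ 0 := by rintro rfl; simp at h2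
    have hq0 : 0 < Real.sqrt |η| := Real.sqrt_pos.2 (abs_pos.2 hη0)
    exact ⟨lt_of_lt_of_le (by positivity) he1, he2⟩
  · rw [isLittleO_iff]
    intro c hc
    have hρ : 0 < min δ ((c / K) ^ 2) := lt_min hδpos (by positivity)
    have hball : ∀ᶠ η in 𝓝 (0:ℝ), |η| < min δ ((c / K) ^ 2) := by
      filter_upwards [Metric.ball_mem_nhds (0:ℝ) hρ] with η hη
      simpa [Real.dist_eq] using hη
    filter_upwards [nhdsWithin_le_nhds hball, self_mem_nhdsWithin] with η hη hmem
    have h1 : |η| < δ := lt_of_lt_of_le hη (min_le_left _ _)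
    have h2 : a₀ * η < 0 := hmem
    have hη0 : η ≠ 0 := by rintro rfl; simp at h2
    have hq0 : 0 < Real.sqrt |η| := Real.sqrt_pos.2 (abs_pos.2 hη0)
    have hq2 : Real.sqrt |η| ^ 2 = |η| := Real.sq_sqrt (abs_nonneg η)
    simp only [dif_pos (And.intro h1 h2)]
    obtain ⟨_, _, he3⟩ := (key η h1 h2).choose_spec
    have hηc : |η| < (c / K) ^ 2 := lt_of_lt_of_le hη (min_le_right _ _)
    have hqc : Real.sqrt |η| < c / K := (Real.sqrt_lt' (by positivity)).2 hηc
    have hKq : K * Real.sqrt |η| < c := by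
      rw [lt_div_iff₀ hK0] at hqc; linarith
    rw [Real.norm_eq_abs, Real.norm_eq_abs, abs_of_nonneg (Real.sqrt_nonneg |η|)]
    calc |(key η h1 h2).choose - Real.sqrt (-η / (2 * a₀))| ≤ K * |η| := he3
      _ = (K * Real.sqrt |η|) * Real.sqrt |η| := by linear_combination (-K) * hq2
      _ ≤ c * Real.sqrt |η| := mul_le_mul_of_nonneg_right hKq.le hq0.le
end

section
/- Let γ, Ξ ∈ ℝ with γ ≠ 0 and (1 − Ξ)/γ > 0, and for ε ≥ 0 define P(ε) = η + Ξ ε + γ ε^{3/2}. Then the pair of conditions P(ε*) = ε* and P′(ε*) = 1 has a solution with ε* > 0 if and only if ε* = (2(1−Ξ)/(3γ))² and η = η_SN := 4(1−Ξ)³/(27γ²); i.e., the map P undergoes a saddle-node (fold) of fixed points exactly at the parameter value η_SN = (4/27γ²)(1−Ξ)³. -/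
open Filter Topology

/-- Saddle-node of the model map `P(ε) = η + Ξε + γε^{3/2}` (for `ε ≥ 0`).
If `γ ≠ 0` and `(1 − Ξ)/γ > 0`, then `P(ε*) = ε*` together with `P′(ε*) = 1` has a
solution with `ε* > 0` if and only if `ε* = (2(1−Ξ)/(3γ))²` and
`η = η_SN = 4(1−Ξ)³/(27γ²)`. -/
theorem model_map_saddle_node
    (γ Ξ : ℝ) (hγ : γ ≠ 0) (hsign : 0 < (1 - Ξ) / γ) :
    ∀ η εs : ℝ,
      (0 < εs ∧
        η + Ξ * εs + γ * (εs * Real.sqrt εs) = εs ∧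
        deriv (fun ε => η + Ξ * ε + γ * (ε * Real.sqrt ε)) εs = 1)
      ↔ (εs = (2 * (1 - Ξ) / (3 * γ)) ^ 2 ∧ η = 4 * (1 - Ξ) ^ 3 / (27 * γ ^ 2)) := by
  have key : ∀ η x : ℝ, 0 < x →
      deriv (fun ε => η + Ξ * ε + γ * (ε * Real.sqrt ε)) x
        = Ξ + γ * (3 / 2 * Real.sqrt x) := by
    intro η x hx
    have hs : Real.sqrt x ≠ 0 := by positivity
    have h1 : HasDerivAt (fun ε : ℝ => η + Ξ * ε + γ * (ε * Real.sqrt ε))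
        (Ξ * 1 + γ * (1 * Real.sqrt x + x * (1 / (2 * Real.sqrt x)))) x := by
      have h2 := ((hasDerivAt_id x).mul (Real.hasDerivAt_sqrt hx.ne')).const_mul γ
      simpa using (((hasDerivAt_id x).const_mul Ξ).const_add η).fun_add h2
    rw [h1.deriv]
    have hxx : Real.sqrt x * Real.sqrt x = x := Real.mul_self_sqrt hx.le
    field_simp
    linear_combination (-1) * γ * hxx
  intro η εs
  constructor
  · rintro ⟨hpos, hfix, hder⟩
    rw [key η εs hpos] at hder
    have hsv : Real.sqrt εs = 2 * (1 - Ξ) / (3 * γ) := by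
      field_simp at hder ⊢
      linarith
    have hε : εs = (2 * (1 - Ξ) / (3 * γ)) ^ 2 := by
      rw [← hsv, Real.sq_sqrt hpos.le]
    refine ⟨hε, ?_⟩
    rw [hsv] at hfix
    rw [hε] at hfix
    field_simp at hfix ⊢
    have h5 : (81 * γ ^ 5) * (η * (27 * γ ^ 2) - 4 * (1 - Ξ) ^ 3) = 0 := by
      linear_combination 81 * γ ^ 5 * hfix
    have hg : (81 : ℝ) * γ ^ 5 ≠ 0 := by positivity
    have h6 := (mul_eq_zero.mp h5).resolve_left hg
    linarith
  · rintro ⟨hε, hη⟩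
    have hspos : 0 < 2 * (1 - Ξ) / (3 * γ) := by
      have : 2 * (1 - Ξ) / (3 * γ) = 2 / 3 * ((1 - Ξ) / γ) := by ring
      rw [this]; linarith
    have hpos : 0 < εs := by rw [hε]; positivity
    have hsv : Real.sqrt εs = 2 * (1 - Ξ) / (3 * γ) := by
      rw [hε, Real.sqrt_sq hspos.le]
    refine ⟨hpos, ?_, ?_⟩
    · rw [hsv, hε, hη]
      field_simp
      ring
    · rw [key η εs hpos, hsv]
      field_simp
      ring
end

section
/- Let ω > 0 and a₀, τ_R ∈ ℝ with a₀ τ_R < 0, and for ε ≥ 0 and parameters μ, η define the map P(ε; μ, η) = (π/ω³) η + (1 + (π/ω) η + (4πa₀/ω⁵) μ²) ε + (4√2/3) τ_R ε^{3/2}. Then there exist μ̄ > 0 and functions η_SN : (0, μ̄) → ℝ and ε* : (0, μ̄) → (0, ∞) such that for every μ ∈ (0, μ̄), P(ε*(μ); μ, η_SN(μ)) = ε*(μ) and ∂P/∂ε (ε*(μ); μ, η_SN(μ)) = 1; moreover η_SN(μ) = −(8π²a₀³/(3ω¹²τ_R²)) μ⁶ + o(μ⁶) as μ → 0⁺. 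-/
open Filter Asymptotics Topology

noncomputable def SNcbrt (t : ℝ) : ℝ := t ^ ((1:ℝ)/3)

lemma SNcbrt_cube {t : ℝ} (ht : 0 ≤ t) : SNcbrt t ^ 3 = t := by
  rw [SNcbrt, ← Real.rpow_natCast (t ^ ((1:ℝ)/3)) 3, ← Real.rpow_mul ht]
  norm_num

lemma SNcbrt_cube' {x : ℝ} (hx : 0 ≤ x) : SNcbrt (x ^ 3) = x := by
  rw [SNcbrt, ← Real.rpow_natCast x 3, ← Real.rpow_mul hx]
  norm_num

lemma SNcbrt_mul {a b : ℝ} (ha : 0 ≤ a) (hb : 0 ≤ b) :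
    SNcbrt a * SNcbrt b = SNcbrt (a * b) := (Real.mul_rpow ha hb).symm

lemma SNcbrt_pos {t : ℝ} (ht : 0 < t) : 0 < SNcbrt t := Real.rpow_pos_of_pos ht _

lemma SNcbrt_nonneg {t : ℝ} (ht : 0 ≤ t) : 0 ≤ SNcbrt t := Real.rpow_nonneg ht _

lemma SNcbrt_lt {a b : ℝ} (ha : 0 ≤ a) (hab : a < b) : SNcbrt a < SNcbrt b :=
  Real.rpow_lt_rpow ha hab (by norm_num)

set_option maxHeartbeats 1600000 in
/-- The saddle-node curve of the full Poincaré map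
`P(ε;μ,η) = (π/ω³)η + (1 + (π/ω)η + (4πa₀/ω⁵)μ²)ε + (4√2/3)τ_R ε^{3/2}`. If `a₀τ_R < 0`,
there are functions `η_SN(μ)`, `ε*(μ) > 0` (for `0 < μ < μ̄`) satisfying the fixed-point
and unit-multiplier conditions, with
`η_SN(μ) = −(8π²a₀³/(3ω¹²τ_R²))μ⁶ + o(μ⁶)` as `μ → 0⁺`. -/
theorem saddle_node_curve_h3
    (ω a₀ τR : ℝ) (hω : 0 < ω) (hsign : a₀ * τR < 0) :
    let P : ℝ → ℝ → ℝ → ℝ := fun ε μ η =>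
      (Real.pi / ω ^ 3) * η + (1 + (Real.pi / ω) * η + (4 * Real.pi * a₀ / ω ^ 5) * μ ^ 2) * ε
        + (4 * Real.sqrt 2 / 3) * τR * (ε * Real.sqrt ε)
    ∃ μbar > 0, ∃ ηSN εs : ℝ → ℝ,
      (∀ μ ∈ Set.Ioo (0 : ℝ) μbar,
        0 < εs μ ∧
        P (εs μ) μ (ηSN μ) = εs μ ∧
        deriv (fun ε => P ε μ (ηSN μ)) (εs μ) = 1) ∧
      -- η_SN(μ) = −(8π²a₀³/(3ω¹²τ_R²))μ⁶ + o(μ⁶)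
      ((fun μ => ηSN μ - (-(8 * Real.pi ^ 2 * a₀ ^ 3 / (3 * ω ^ 12 * τR ^ 2)) * μ ^ 6))
        =o[𝓝[>] (0 : ℝ)] fun μ => μ ^ 6) := by
  intro P
  have hP : P = fun ε μ η =>
      (Real.pi / ω ^ 3) * η + (1 + (Real.pi / ω) * η + (4 * Real.pi * a₀ / ω ^ 5) * μ ^ 2) * ε
        + (4 * Real.sqrt 2 / 3) * τR * (ε * Real.sqrt ε) := rfl
  have hπ : (0:ℝ) < Real.pi := Real.pi_pos
  have hπ' : Real.pi ≠ 0 := ne_of_gt hπ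
  have hω' : ω ≠ 0 := ne_of_gt hω
  have hτ : τR ≠ 0 := by rintro rfl; simp at hsign
  have h2 : Real.sqrt 2 ^ 2 = 2 := Real.sq_sqrt (by norm_num)
  set C : ℝ := 4 * Real.sqrt 2 / 3 * τR with hCdef
  have hC : C ≠ 0 := mul_ne_zero (by positivity) hτ
  have hC2 : C ^ 2 = 32 / 9 * τR ^ 2 := by
    rw [hCdef, mul_pow, div_pow, mul_pow, h2]; ring
  have haC : a₀ * C < 0 := by
    have : a₀ * C = (4 * Real.sqrt 2 / 3) * (a₀ * τR) := by rw [hCdef]; ring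
    rw [this]; exact mul_neg_of_pos_of_neg (by positivity) hsign
  set p : ℝ := 3 / ω ^ 2 with hpdef
  have hp : 0 < p := by rw [hpdef]; positivity
  have hpω : p * ω ^ 2 = 3 := by rw [hpdef]; field_simp
  set q0 : ℝ := -8 * Real.pi * a₀ / (C * ω ^ 7) with hq0def
  have hq0 : 0 < q0 := by
    have h1 : q0 = (-8 * Real.pi * (a₀ * C)) / (C ^ 2 * ω ^ 7) := by
      rw [hq0def, div_eq_div_iff (mul_ne_zero hC (by positivity)) (by positivity)]
      ring
    rw [h1]
    exact div_pos (by nlinarith) (by positivity)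
  have hk : 4 * Real.pi * a₀ / ω ^ 5 = -(C * ω ^ 2 / 2) * q0 := by
    rw [hq0def]; field_simp; ring
  set D : ℝ → ℝ := fun μ => Real.sqrt ((q0 * μ ^ 2) ^ 2 / 4 + p ^ 3 / 27) with hDdef
  have hDsq : ∀ μ : ℝ, D μ ^ 2 = (q0 * μ ^ 2) ^ 2 / 4 + p ^ 3 / 27 := by
    intro μ; simp only [hDdef]; exact Real.sq_sqrt (by positivity)
  have hD0 : ∀ μ : ℝ, 0 ≤ D μ := fun μ => Real.sqrt_nonneg _
  set Aa : ℝ → ℝ := fun μ => q0 * μ ^ 2 / 2 + D μ with hAadef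
  set Bb : ℝ → ℝ := fun μ => D μ - q0 * μ ^ 2 / 2 with hBbdef
  have hBpos : ∀ μ : ℝ, 0 < Bb μ := by
    intro μ
    have ht : (0:ℝ) ≤ q0 * μ ^ 2 / 2 := by positivity
    have hD2 := hDsq μ
    simp only [hBbdef]
    nlinarith [hD0 μ, pow_pos hp 3]
  have hDpos : ∀ μ : ℝ, 0 < D μ := by
    intro μ; simp only [hDdef]; exact Real.sqrt_pos.mpr (by positivity)
  have hApos : ∀ μ : ℝ, 0 < Aa μ := by
    intro μ
    have ht : (0:ℝ) ≤ q0 * μ ^ 2 / 2 := by positivity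
    simp only [hAadef]
    linarith [hDpos μ]
  have hABmul : ∀ μ : ℝ, Aa μ * Bb μ = (p / 3) ^ 3 := by
    intro μ
    simp only [hAadef, hBbdef]
    have := hDsq μ
    nlinarith [this]
  have hABsub : ∀ μ : ℝ, Aa μ - Bb μ = q0 * μ ^ 2 := by
    intro μ; simp only [hAadef, hBbdef]; ring
  set s : ℝ → ℝ := fun μ => SNcbrt (Aa μ) - SNcbrt (Bb μ) with hsdef
  have ha3 : ∀ μ : ℝ, SNcbrt (Aa μ) ^ 3 = Aa μ := fun μ => SNcbrt_cube (hApos μ).le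
  have hb3 : ∀ μ : ℝ, SNcbrt (Bb μ) ^ 3 = Bb μ := fun μ => SNcbrt_cube (hBpos μ).le
  have hab : ∀ μ : ℝ, SNcbrt (Aa μ) * SNcbrt (Bb μ) = p / 3 := by
    intro μ
    rw [SNcbrt_mul (hApos μ).le (hBpos μ).le, hABmul μ]
    exact SNcbrt_cube' (by positivity)
  have hcubic : ∀ μ : ℝ, s μ ^ 3 + p * s μ = q0 * μ ^ 2 := by
    intro μ
    simp only [hsdef]
    linear_combination ha3 μ - hb3 μ - (3 * (SNcbrt (Aa μ) - SNcbrt (Bb μ))) * hab μ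
      + hABsub μ
  have hspos : ∀ μ : ℝ, 0 < μ → 0 < s μ := by
    intro μ hμ
    simp only [hsdef, sub_pos]
    apply SNcbrt_lt (hBpos μ).le
    simp only [hAadef, hBbdef]
    nlinarith [hq0, sq_nonneg μ, mul_pos hq0 (pow_pos hμ 2)]
  refine ⟨1, one_pos, fun μ => ω ^ 3 * C / (2 * Real.pi) * s μ ^ 3, fun μ => s μ ^ 2, ?_, ?_⟩
  · rintro μ ⟨hμ, -⟩
    have hsμ := hspos μ hμ
    have hεpos : 0 < s μ ^ 2 := pow_pos hsμ 2
    refine ⟨hεpos, ?_, ?_⟩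
    · simp only [hP]
      rw [Real.sqrt_sq hsμ.le, hk]
      have h1 : Real.pi / ω ^ 3 * (ω ^ 3 * C / (2 * Real.pi) * s μ ^ 3) = C / 2 * s μ ^ 3 := by
        field_simp
      have h2' : Real.pi / ω * (ω ^ 3 * C / (2 * Real.pi) * s μ ^ 3)
          = C * ω ^ 2 / 2 * s μ ^ 3 := by
        field_simp
      rw [h1, h2']
      linear_combination (C * ω ^ 2 / 2 * s μ ^ 2) * hcubic μ - (C * s μ ^ 3 / 2) * hpω
    · simp only [hP]
      have hx : (s μ ^ 2 : ℝ) ≠ 0 := ne_of_gt hεpos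
      have hsq : HasDerivAt Real.sqrt (1 / (2 * Real.sqrt (s μ ^ 2))) (s μ ^ 2) :=
        Real.hasDerivAt_sqrt hx
      have hmul : HasDerivAt (fun ε : ℝ => ε * Real.sqrt ε)
          (1 * Real.sqrt (s μ ^ 2) + s μ ^ 2 * (1 / (2 * Real.sqrt (s μ ^ 2)))) (s μ ^ 2) :=
        (hasDerivAt_id (s μ ^ 2)).mul hsq
      have hd : HasDerivAt (fun ε : ℝ =>
          Real.pi / ω ^ 3 * (ω ^ 3 * C / (2 * Real.pi) * s μ ^ 3)
            + (1 + Real.pi / ω * (ω ^ 3 * C / (2 * Real.pi) * s μ ^ 3)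
                + 4 * Real.pi * a₀ / ω ^ 5 * μ ^ 2) * ε
            + C * (ε * Real.sqrt ε))
          (0 + (1 + Real.pi / ω * (ω ^ 3 * C / (2 * Real.pi) * s μ ^ 3)
                + 4 * Real.pi * a₀ / ω ^ 5 * μ ^ 2) * 1
            + C * (1 * Real.sqrt (s μ ^ 2) + s μ ^ 2 * (1 / (2 * Real.sqrt (s μ ^ 2)))))
          (s μ ^ 2) := by
        exact ((hasDerivAt_const _ _).add
          ((hasDerivAt_id (s μ ^ 2)).const_mul _)).add (hmul.const_mul C)
      rw [hd.deriv, Real.sqrt_sq hsμ.le, hk]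
      have h2' : Real.pi / ω * (ω ^ 3 * C / (2 * Real.pi) * s μ ^ 3)
          = C * ω ^ 2 / 2 * s μ ^ 3 := by
        field_simp
      rw [h2']
      have h3 : s μ ^ 2 * (1 / (2 * s μ)) = s μ / 2 := by
        field_simp
      rw [h3]
      linear_combination (C * ω ^ 2 / 2) * hcubic μ - (C * s μ / 2) * hpω
  · -- asymptotics
    set L : ℝ := -(8 * Real.pi ^ 2 * a₀ ^ 3 / (3 * ω ^ 12 * τR ^ 2)) with hLdef
    have hev : ∀ᶠ μ in 𝓝[>] (0:ℝ), μ ^ 6 = (0:ℝ) →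
        (ω ^ 3 * C / (2 * Real.pi) * s μ ^ 3 - L * μ ^ 6 : ℝ) = 0 := by
      filter_upwards [self_mem_nhdsWithin] with μ hμ h
      exact absurd h (pow_ne_zero _ (ne_of_gt (Set.mem_Ioi.mp hμ)))
    rw [isLittleO_iff_tendsto' hev]
    set den : ℝ → ℝ := fun μ =>
      SNcbrt (Aa μ) ^ 2 + SNcbrt (Aa μ) * SNcbrt (Bb μ) + SNcbrt (Bb μ) ^ 2 with hdendef
    have hdenpos : ∀ μ : ℝ, 0 < den μ := by
      intro μ
      simp only [hdendef]
      have h1 := SNcbrt_pos (hApos μ)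
      have h2'' := SNcbrt_pos (hBpos μ)
      positivity
    have hsden : ∀ μ : ℝ, s μ * den μ = q0 * μ ^ 2 := by
      intro μ
      simp only [hsdef, hdendef]
      linear_combination ha3 μ - hb3 μ + hABsub μ
    have hsdiv : ∀ μ : ℝ, 0 < μ → s μ / μ ^ 2 = q0 / den μ := by
      intro μ hμ
      rw [div_eq_div_iff (by positivity) (ne_of_gt (hdenpos μ))]
      linear_combination hsden μ
    -- continuity of den at 0
    have hAcont : ContinuousAt Aa 0 := by
      simp only [hAadef, hDdef]
      fun_prop
    have hBcont : ContinuousAt Bb 0 := by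
      simp only [hBbdef, hDdef]
      fun_prop
    have hcbA : ContinuousAt (fun μ => SNcbrt (Aa μ)) 0 :=
      (Real.continuousAt_rpow_const (Aa 0) _ (Or.inl (ne_of_gt (hApos 0)))).comp hAcont
    have hcbB : ContinuousAt (fun μ => SNcbrt (Bb μ)) 0 :=
      (Real.continuousAt_rpow_const (Bb 0) _ (Or.inl (ne_of_gt (hBpos 0)))).comp hBcont
    have hdencont : ContinuousAt den 0 := by
      simp only [hdendef]
      exact ((hcbA.pow 2).add (hcbA.mul hcbB)).add (hcbB.pow 2)
    have hden0 : den 0 = p := by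
      have heq : Aa 0 = Bb 0 := by simp only [hAadef, hBbdef]; norm_num
      have habeq : SNcbrt (Aa 0) = SNcbrt (Bb 0) := by rw [heq]
      have h0 := hab 0
      simp only [hdendef]
      rw [← habeq] at h0 ⊢
      nlinarith [h0]
    have hdentend : Tendsto den (𝓝[>] (0:ℝ)) (𝓝 p) := by
      rw [← hden0]
      exact hdencont.continuousWithinAt.tendsto
    have ht1 : Tendsto (fun μ => s μ / μ ^ 2) (𝓝[>] (0:ℝ)) (𝓝 (q0 / p)) := by
      have : Tendsto (fun μ => q0 / den μ) (𝓝[>] (0:ℝ)) (𝓝 (q0 / p)) :=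
        tendsto_const_nhds.div hdentend (ne_of_gt hp)
      refine this.congr' ?_
      filter_upwards [self_mem_nhdsWithin] with μ hμ
      exact (hsdiv μ hμ).symm
    have hLid : ω ^ 3 * C / (2 * Real.pi) * (q0 / p) ^ 3 = L := by
      rw [hLdef, hq0def, hpdef]
      field_simp
      linear_combination (32 * a₀ ^ 3 * τR ^ 2) * h2
    have ht4 : Tendsto (fun μ => ω ^ 3 * C / (2 * Real.pi) * (s μ / μ ^ 2) ^ 3 - L)
        (𝓝[>] (0:ℝ)) (𝓝 (ω ^ 3 * C / (2 * Real.pi) * (q0 / p) ^ 3 - L)) :=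
      ((ht1.pow 3).const_mul _).sub tendsto_const_nhds
    rw [hLid, sub_self] at ht4
    have haux : ∀ v m K Lc : ℝ, m ≠ 0 →
        K * (v / m ^ 2) ^ 3 - Lc = (K * v ^ 3 - Lc * m ^ 6) / m ^ 6 := by
      intro v m K Lc hm
      field_simp
    refine ht4.congr' ?_
    filter_upwards [self_mem_nhdsWithin] with μ hμ
    exact haux (s μ) μ _ L (ne_of_gt (Set.mem_Ioi.mp hμ))
end
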